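/- arXiv:1712.00831 — 5 statements merged into one kernel-verified Lean document; each statement's English description precedes it below -/
import Mathlib

section
/- For every k ≥ 2 there is a constant c_k > 0 such that for every ℓ ≥ 3 with ℓ ≠ 4 and ℓ ≠ k, and every sufficiently large n, there exists an n-vertex graph with no cycle of length ℓ containing at least c_k · n^{⌊k/2⌋} copies of the cycle C_k. -/
open SimpleGraph

/-- Number of unlabeled copies of `H` in `G`, i.e. the number of subgraphs of `G`
whose coercion is isomorphic to `H`. -/
noncomputable def copyCount {α β : Type*} (H : SimpleGraph α) (G : SimpleGraph β) : ℕ :=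
  Nat.card {G' : G.Subgraph // Nonempty (H ≃g G'.coe)}

/-- `G` contains no cycle of length `m`. -/
def CycleFree {V : Type*} (G : SimpleGraph V) (m : ℕ) : Prop :=
  ∀ ⦃v : V⦄ (w : G.Walk v v), w.IsCycle → w.length ≠ m

/-- The number of `(U 0, …, U (k-1))`-cycles in `G`. -/
noncomputable def cCount {V : Type*} (G : SimpleGraph V) {k : ℕ} (U : Fin k → Set V) : ℕ :=
  Nat.card {u : Fin k → V // (∀ i, u i ∈ U i) ∧ ∀ i : Fin k, G.Adj (u i) (u ⟨(i.val + 1) % k, Nat.mod_lt _ i.pos⟩)}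

/-- The number of `(U 0, …, U (k-1))`-paths in `G`. -/
noncomputable def pCount {V : Type*} (G : SimpleGraph V) {k : ℕ} (U : Fin k → Set V) : ℕ :=
  Nat.card {u : Fin k → V // (∀ i, u i ∈ U i) ∧
    ∀ (i : ℕ) (h : i + 1 < k), G.Adj (u ⟨i, Nat.lt_of_succ_lt h⟩) (u ⟨i + 1, h⟩)}

/-- The number of edges of `G` between the disjoint sets `X` and `Y`. -/
noncomputable def eCount {V : Type*} (G : SimpleGraph V) (X Y : Set V) : ℕ :=
  Nat.card {p : V × V // p.1 ∈ X ∧ p.2 ∈ Y ∧ G.Adj p.1 p.2}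

/-- The neighbourhood of `v` inside the set `Y`. -/
def nbhdIn {V : Type*} (G : SimpleGraph V) (v : V) (Y : Set V) : Set V :=
  {y ∈ Y | G.Adj v y}

/-- The independence number of a finite graph. -/
noncomputable def indepNum {W : Type*} [Fintype W] (G : SimpleGraph W) : ℕ :=
  sSup {m | ∃ s : Finset W, (∀ a ∈ s, ∀ b ∈ s, ¬ G.Adj a b) ∧ s.card = m}


section FinHelp
variable {k : ℕ} [NeZero k]
open scoped Fin.CommRing

lemma aux_val_one (hk : 2 ≤ k) : ((1 : Fin k) : ℕ) = 1 := by
  rw [Fin.val_one']; exact Nat.mod_eq_of_lt (by omega)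

lemma aux_fin_adj (hk : 2 ≤ k) {x y : Fin k} (h : (cycleGraph k).Adj x y) :
    x = y + 1 ∨ y = x + 1 := by
  rw [cycleGraph_adj'] at h
  rcases h with h | h
  · left
    have hxy : x - y = 1 := Fin.ext (by rw [h, aux_val_one hk])
    rw [← hxy]; ring
  · right
    have hxy : y - x = 1 := Fin.ext (by rw [h, aux_val_one hk])
    rw [← hxy]; ring

lemma aux_succ_val (hk : 2 ≤ k) (b : Fin k) :
    ((b + 1 : Fin k) : ℕ) = b.val + 1 ∨ (b.val + 1 = k ∧ ((b + 1 : Fin k) : ℕ) = 0) := by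
  have hb := b.isLt
  have hadd : ((b + 1 : Fin k) : ℕ) = (b.val + 1) % k := by
    rw [Fin.add_def]; simp [aux_val_one hk]
  rcases Nat.lt_or_ge (b.val + 1) k with h | h
  · left; rw [hadd, Nat.mod_eq_of_lt h]
  · right
    have hbk : b.val + 1 = k := by omega
    exact ⟨hbk, by rw [hadd, hbk, Nat.mod_self]⟩

lemma aux_adj_parity (hk : 2 ≤ k) {x y : Fin k} (h : (cycleGraph k).Adj x y) :
    x.val % 2 = 0 ∨ y.val % 2 = 0 := by
  rcases aux_fin_adj hk h with h' | h'
  · rcases aux_succ_val hk y with hv | ⟨_, hv⟩ <;> rw [h'] <;> omega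
  · rcases aux_succ_val hk x with hv | ⟨_, hv⟩ <;> rw [h'] <;> omega

end FinHelp

/-- The class map for the blowup construction. -/
def tmap (k : ℕ) (hk : 2 ≤ k) {n : ℕ} (x : Fin n) : Fin k :=
  if h : x.val < k then ⟨x.val, h⟩
  else ⟨2 * ((x.val - k) % (k / 2)) + 1, by
    have := Nat.mod_lt (x.val - k) (show 0 < k / 2 by omega)
    omega⟩

lemma tmap_val_even {k n : ℕ} (hk : 2 ≤ k) {x : Fin n}
    (h : (tmap k hk x).val % 2 = 0) : (tmap k hk x).val = x.val := by
  by_cases hx : x.val < k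
  · simp [tmap, hx]
  · simp only [tmap, hx, dif_neg, not_false_iff] at h; omega

lemma tmap_inj_even {k n : ℕ} (hk : 2 ≤ k) {x y : Fin n}
    (h : tmap k hk x = tmap k hk y) (hev : (tmap k hk x).val % 2 = 0) : x = y := by
  have h1 := tmap_val_even hk hev
  have h2 := tmap_val_even hk (h ▸ hev)
  apply Fin.ext
  rw [← h1, ← h2, h]

section GetVert
variable {V : Type*} {G : SimpleGraph V}

lemma aux_path_getVert_inj {u v : V} {p : G.Walk u v} (hp : p.IsPath) :
    ∀ i ≤ p.length, ∀ j ≤ p.length, p.getVert i = p.getVert j → i = j := by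
  induction p with
  | nil => intro i hi j hj _; simp only [Walk.length_nil, Nat.le_zero] at hi hj; omega
  | cons h q ih =>
    rw [Walk.cons_isPath_iff] at hp
    intro i hi j hj heq
    match i, j with
    | 0, 0 => rfl
    | 0, j + 1 =>
      exfalso
      apply hp.2
      rw [Walk.mem_support_iff_exists_getVert]
      refine ⟨j, ?_, by simpa using hj⟩
      rw [← Walk.getVert_cons_succ q h, ← heq, Walk.getVert_zero]
    | i + 1, 0 =>
      exfalso
      apply hp.2
      rw [Walk.mem_support_iff_exists_getVert]
      refine ⟨i, ?_, by simpa using hi⟩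
      rw [← Walk.getVert_cons_succ q h, heq, Walk.getVert_zero]
    | i + 1, j + 1 =>
      have := ih hp.1 i (by simpa using hi) j (by simpa using hj)
        (by rwa [Walk.getVert_cons_succ, Walk.getVert_cons_succ] at heq)
      omega

lemma aux_cycle_getVert_inj {v : V} {w : G.Walk v v} (hw : w.IsCycle) :
    ∀ i < w.length, ∀ j < w.length, w.getVert i = w.getVert j → i = j := by
  cases w with
  | nil => exact absurd hw Walk.IsCycle.not_of_nil
  | cons h q =>
    rw [Walk.cons_isCycle_iff] at hw
    intro i hi j hj heq
    simp only [Walk.length_cons] at hi hj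
    match i, j with
    | 0, 0 => rfl
    | 0, j + 1 =>
      exfalso
      have h1 : q.getVert j = q.getVert q.length := by
        rw [Walk.getVert_length, ← Walk.getVert_cons_succ q h, ← heq, Walk.getVert_zero]
      have := aux_path_getVert_inj hw.1 j (by omega) q.length le_rfl h1
      omega
    | i + 1, 0 =>
      exfalso
      have h1 : q.getVert i = q.getVert q.length := by
        rw [Walk.getVert_length, ← Walk.getVert_cons_succ q h, heq, Walk.getVert_zero]
      have := aux_path_getVert_inj hw.1 i (by omega) q.length le_rfl h1
      omega
    | i + 1, j + 1 =>
      have := aux_path_getVert_inj hw.1 i (by omega) j (by omega)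
        (by rwa [Walk.getVert_cons_succ, Walk.getVert_cons_succ] at heq)
      omega

end GetVert

/-- The representative vertices of a copy of `cycleGraph k` determined by a choice `c`. -/
def cvert (k : ℕ) (hk : 2 ≤ k) {n : ℕ} (hn : k ≤ n)
    (c : Fin (k / 2) → Fin ((n - k) / (k / 2))) (i : Fin k) : Fin n :=
  if h : i.val % 2 = 1 then
    ⟨k + (c ⟨(i.val - 1) / 2, by have := i.isLt; omega⟩).val * (k / 2) + (i.val - 1) / 2, by
      have h1 := (c ⟨(i.val - 1) / 2, by have := i.isLt; omega⟩).isLt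
      have h2 := Nat.div_mul_le_self (n - k) (k / 2)
      have h3 : ((c ⟨(i.val - 1) / 2, by have := i.isLt; omega⟩).val + 1) * (k / 2) ≤
          (n - k) / (k / 2) * (k / 2) := Nat.mul_le_mul_right _ h1
      rw [Nat.succ_mul] at h3
      have h4 := i.isLt
      omega⟩
  else ⟨i.val, by have := i.isLt; omega⟩

lemma tmap_cvert (k : ℕ) (hk : 2 ≤ k) {n : ℕ} (hn : k ≤ n)
    (c : Fin (k / 2) → Fin ((n - k) / (k / 2))) (i : Fin k) :
    tmap k hk (cvert k hk hn c i) = i := by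
  apply Fin.ext
  by_cases h : i.val % 2 = 1
  · have hlt := i.isLt
    simp only [cvert, h, dif_pos]
    have hge : ¬ (k + (c ⟨(i.val - 1) / 2, by omega⟩).val * (k / 2) + (i.val - 1) / 2 < k) := by omega
    simp only [tmap, hge, dif_neg, not_false_iff]
    have e1 : k + (c ⟨(i.val - 1) / 2, by omega⟩).val * (k / 2) + (i.val - 1) / 2 - k =
        (c ⟨(i.val - 1) / 2, by omega⟩).val * (k / 2) + (i.val - 1) / 2 := by omega
    rw [e1]
    have e2 : (↑(c ⟨(i.val - 1) / 2, by omega⟩) * (k / 2) + (i.val - 1) / 2) % (k / 2) =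
        (i.val - 1) / 2 := by
      rw [Nat.add_comm, Nat.add_mul_mod_self_right]
      exact Nat.mod_eq_of_lt (by omega)
    rw [e2]
    omega
  · have hlt := i.isLt
    simp only [cvert, h, dif_neg, not_false_iff]
    simp only [tmap, hlt, dif_pos]

section Copies
variable (k : ℕ) (hk : 2 ≤ k) {n : ℕ} (hn : k ≤ n)
  (c : Fin (k / 2) → Fin ((n - k) / (k / 2)))

/-- The choice `c` as a graph homomorphism from `cycleGraph k` into the blowup. -/
def chom : cycleGraph k →g SimpleGraph.comap (tmap k hk (n := n)) (cycleGraph k) where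
  toFun := cvert k hk hn c
  map_rel' := by
    intro x y hxy
    show (cycleGraph k).Adj (tmap k hk (cvert k hk hn c x)) (tmap k hk (cvert k hk hn c y))
    rwa [tmap_cvert, tmap_cvert]

lemma cvert_inj : Function.Injective (cvert k hk hn c) := by
  intro x y h
  have := congrArg (tmap k hk) h
  rwa [tmap_cvert, tmap_cvert] at this

/-- The copy of `cycleGraph k` in the blowup determined by the choice `c`. -/
def csub : (SimpleGraph.comap (tmap k hk (n := n)) (cycleGraph k)).Subgraph :=
  SimpleGraph.Subgraph.map (chom k hk hn c) ⊤

lemma csub_iso : Nonempty (cycleGraph k ≃g (csub k hk hn c).coe) := by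
  have hmem : ∀ i : Fin k, cvert k hk hn c i ∈ (csub k hk hn c).verts := by
    intro i
    rw [csub, Subgraph.map_verts]
    exact ⟨i, trivial, rfl⟩
  refine ⟨⟨Equiv.ofBijective (fun i => ⟨cvert k hk hn c i, hmem i⟩) ⟨?_, ?_⟩, ?_⟩⟩
  · intro x y h
    exact cvert_inj k hk hn c (congrArg Subtype.val h)
  · rintro ⟨x, hx⟩
    rw [csub, Subgraph.map_verts] at hx
    obtain ⟨i, -, rfl⟩ := hx
    exact ⟨i, rfl⟩
  · intro x y
    simp only [Equiv.ofBijective_apply, Subgraph.coe_adj, csub, Subgraph.map_adj]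
    constructor
    · rintro ⟨x', y', hxy, hx, hy⟩
      have hx' : x' = x := cvert_inj k hk hn c hx
      have hy' : y' = y := cvert_inj k hk hn c hy
      rw [← hx', ← hy']
      exact Subgraph.top_adj.mp hxy
    · intro h
      exact ⟨x, y, Subgraph.top_adj.mpr h, rfl, rfl⟩

end Copies

@[simp] lemma chom_coe (k : ℕ) (hk : 2 ≤ k) {n : ℕ} (hn : k ≤ n)
    (c : Fin (k / 2) → Fin ((n - k) / (k / 2))) : ⇑(chom k hk hn c) = cvert k hk hn c := rfl

lemma cvert_val_odd (k : ℕ) (hk : 2 ≤ k) {n : ℕ} (hn : k ≤ n)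
    (c : Fin (k / 2) → Fin ((n - k) / (k / 2))) (i : Fin k) (hio : i.val % 2 = 1) :
    (cvert k hk hn c i).val =
      k + (c ⟨(i.val - 1) / 2, by have := i.isLt; omega⟩).val * (k / 2) + (i.val - 1) / 2 := by
  simp only [cvert, hio, dif_pos]

lemma cvert_val_even (k : ℕ) (hk : 2 ≤ k) {n : ℕ} (hn : k ≤ n)
    (c : Fin (k / 2) → Fin ((n - k) / (k / 2))) (i : Fin k) (hio : ¬ i.val % 2 = 1) :
    (cvert k hk hn c i).val = i.val := by
  simp only [cvert, hio, dif_neg, not_false_iff]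

lemma csub_injective (k : ℕ) (hk : 2 ≤ k) {n : ℕ} (hn : k ≤ n) :
    Function.Injective (csub k hk hn (n := n)) := by
  intro c c' h
  have hverts : (csub k hk hn c).verts = (csub k hk hn c').verts := by rw [h]
  rw [csub, csub, Subgraph.map_verts, Subgraph.map_verts, chom_coe, chom_coe] at hverts
  funext j
  have hj2 : 2 * j.val + 1 < k := by have := j.isLt; omega
  have hiodd : (⟨2 * j.val + 1, hj2⟩ : Fin k).val % 2 = 1 := by
    show (2 * j.val + 1) % 2 = 1; omega
  have hx : cvert k hk hn c ⟨2 * j.val + 1, hj2⟩ ∈ cvert k hk hn c' '' (⊤ : (cycleGraph k).Subgraph).verts := by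
    rw [← hverts]
    exact ⟨⟨2 * j.val + 1, hj2⟩, trivial, rfl⟩
  obtain ⟨i', -, hii⟩ := hx
  have hval : (cvert k hk hn c' i').val = (cvert k hk hn c ⟨2 * j.val + 1, hj2⟩).val :=
    congrArg Fin.val hii
  have hmk : (⟨2 * j.val + 1, hj2⟩ : Fin k).val = 2 * j.val + 1 := rfl
  have hcv := cvert_val_odd k hk hn c ⟨2 * j.val + 1, hj2⟩ hiodd
  have hi'odd : i'.val % 2 = 1 := by
    by_contra hodd
    have h1 := cvert_val_even k hk hn c' i' hodd
    have := i'.isLt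
    omega
  have hcv' := cvert_val_odd k hk hn c' i' hi'odd
  have hjlt : ((⟨2 * j.val + 1, hj2⟩ : Fin k).val - 1) / 2 < k / 2 := by
    show (2 * j.val + 1 - 1) / 2 < k / 2; omega
  have hjlt' : (i'.val - 1) / 2 < k / 2 := by have := i'.isLt; omega
  have heq : (c' ⟨(i'.val - 1) / 2, hjlt'⟩).val * (k / 2) + (i'.val - 1) / 2 =
      (c ⟨((⟨2 * j.val + 1, hj2⟩ : Fin k).val - 1) / 2, hjlt⟩).val * (k / 2) +
        ((⟨2 * j.val + 1, hj2⟩ : Fin k).val - 1) / 2 := by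
    rw [hcv, hcv'] at hval
    omega
  have hmod := congrArg (· % (k / 2)) heq
  simp only [Nat.add_comm _ ((i'.val - 1) / 2),
    Nat.add_comm _ (((⟨2 * j.val + 1, hj2⟩ : Fin k).val - 1) / 2)] at hmod
  rw [Nat.add_mul_mod_self_right, Nat.add_mul_mod_self_right,
    Nat.mod_eq_of_lt hjlt', Nat.mod_eq_of_lt hjlt] at hmod
  have hjj : ((⟨2 * j.val + 1, hj2⟩ : Fin k).val - 1) / 2 = j.val := by
    show (2 * j.val + 1 - 1) / 2 = j.val; omega
  have hjj' : (i'.val - 1) / 2 = j.val := by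
    rw [hjj] at hmod; omega
  have hmul : (c' ⟨(i'.val - 1) / 2, hjlt'⟩).val * (k / 2) =
      (c ⟨((⟨2 * j.val + 1, hj2⟩ : Fin k).val - 1) / 2, hjlt⟩).val * (k / 2) := by omega
  have hcval := Nat.eq_of_mul_eq_mul_right (show 0 < k / 2 by omega) hmul
  have e1 : (⟨(i'.val - 1) / 2, hjlt'⟩ : Fin (k / 2)) = j := Fin.ext hjj'
  have e2 : (⟨((⟨2 * j.val + 1, hj2⟩ : Fin k).val - 1) / 2, hjlt⟩ : Fin (k / 2)) = j := Fin.ext hjj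
  rw [e1, e2] at hcval
  exact (Fin.ext hcval).symm

open scoped Fin.CommRing in
lemma blowup_cycleFree (k n : ℕ) (hk : 2 ≤ k) (l : ℕ) (h3 : 3 ≤ l) (h4 : l ≠ 4) (hlk : l ≠ k) :
    CycleFree (SimpleGraph.comap (tmap k hk (n := n)) (cycleGraph k)) l := by
  haveI : NeZero k := ⟨by omega⟩
  intro v w hw hlen
  set L := w.length with hL
  have hL3 : 3 ≤ L := by omega
  have hL4 : L ≠ 4 := by omega
  have hLk : L ≠ k := by omega
  have hL0 : 0 < L := by omega
  set U : ℕ → Fin n := fun i => w.getVert (i % L) with hU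
  have hUinj : ∀ i j, U i = U j → i % L = j % L := by
    intro i j h
    exact aux_cycle_getVert_inj hw _ (Nat.mod_lt _ hL0) _ (Nat.mod_lt _ hL0) h
  have hUadj : ∀ i, (SimpleGraph.comap (tmap k hk (n := n)) (cycleGraph k)).Adj (U i) (U (i + 1)) := by
    intro i
    have h1 : i % L < L := Nat.mod_lt _ hL0
    have h2 : (i + 1) % L = (i % L + 1) % L :=
      ((Nat.mod_modEq i L).add_right 1).symm
    rcases Nat.lt_or_ge (i % L + 1) L with hc | hc
    · have h3' : (i + 1) % L = i % L + 1 := by rw [h2, Nat.mod_eq_of_lt hc]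
      show (SimpleGraph.comap (tmap k hk (n := n)) (cycleGraph k)).Adj (w.getVert (i % L)) (w.getVert ((i + 1) % L))
      rw [h3']
      exact w.adj_getVert_succ h1
    · have hceq : i % L + 1 = L := by omega
      have h3' : (i + 1) % L = 0 := by rw [h2, hceq, Nat.mod_self]
      show (SimpleGraph.comap (tmap k hk (n := n)) (cycleGraph k)).Adj (w.getVert (i % L)) (w.getVert ((i + 1) % L))
      rw [h3', Walk.getVert_zero]
      have := w.adj_getVert_succ (show i % L < w.length by omega)
      rwa [hceq, Walk.getVert_length] at this
  set a : ℕ → Fin k := fun i => tmap k hk (U i) with ha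
  have hadj : ∀ i, (cycleGraph k).Adj (a i) (a (i + 1)) := fun i => comap_adj.mp (hUadj i)
  have F3 : ∀ i, a (i + 1) = a i + 1 ∨ a i = a (i + 1) + 1 := by
    intro i
    rcases aux_fin_adj hk (hadj i) with h | h
    · right; exact h
    · left; exact h
  have hAP : ∀ i, (a i).val % 2 = 0 ∨ (a (i + 1)).val % 2 = 0 := fun i => aux_adj_parity hk (hadj i)
  have even_eq : ∀ i j, a i = a j → (a i).val % 2 = 0 → i % L = j % L := by
    intro i j h hev
    exact hUinj i j (tmap_inj_even hk h hev)
  have hdvd : ∀ i j, i ≤ j → i % L = j % L → L ∣ (j - i) := by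
    intro i j hij h
    exact (Nat.modEq_iff_dvd' hij).mp h
  -- given two same-class even-valued positions at distance d with 0 < d < L impossible unless L ∣ d
  have small : ∀ i j, i ≤ j → a i = a j → (a i).val % 2 = 0 → L ∣ (j - i) := by
    intro i j hij h hev
    exact hdvd i j hij (even_eq i j h hev)
  by_cases hturn : ∃ j, a (j + 3) = a (j + 1)
  · -- a turn exists: conclude L ∣ 4, contradiction
    obtain ⟨j, hj⟩ := hturn
    have hcodd : (a (j + 1)).val % 2 = 1 := by
      by_contra hc
      have hev : (a (j + 1)).val % 2 = 0 := by omega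
      have := small (j + 1) (j + 3) (by omega) hj.symm hev
      have h2 : j + 3 - (j + 1) = 2 := by omega
      rw [h2] at this
      have := Nat.le_of_dvd (by omega) this
      omega
    have hm : a (j + 2) = a (j + 1) + 1 ∨ a (j + 2) = a (j + 1) - 1 := by
      rcases F3 (j + 1) with h | h
      · left; exact h
      · right; rw [h]; ring
    have h4' : a (j + 4) = a (j + 1) + 1 ∨ a (j + 4) = a (j + 1) - 1 := by
      have e1 : j + 3 + 1 = j + 4 := by omega
      rcases F3 (j + 3) with h | h
      · left; rw [← hj, ← h, e1]
      · right; rw [hj] at h; rw [h, e1]; ring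
    have h0' : a j = a (j + 1) + 1 ∨ a j = a (j + 1) - 1 := by
      rcases F3 j with h | h
      · right; rw [h]; ring
      · left; exact h
    have hmev : (a (j + 2)).val % 2 = 0 := by
      rcases hAP (j + 1) with h | h
      · omega
      · exact h
    have h0ev : (a j).val % 2 = 0 := by
      rcases hAP j with h | h
      · exact h
      · omega
    have h4m : a (j + 4) ≠ a (j + 2) := by
      intro h
      have := small (j + 2) (j + 4) (by omega) h.symm hmev
      have h2 : j + 4 - (j + 2) = 2 := by omega
      rw [h2] at this
      have := Nat.le_of_dvd (by omega) this
      omega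
    have h0m : a j ≠ a (j + 2) := by
      intro h
      have := small j (j + 2) (by omega) h h0ev
      have h2 : j + 2 - j = 2 := by omega
      rw [h2] at this
      have := Nat.le_of_dvd (by omega) this
      omega
    have h40 : a j = a (j + 4) := by
      rcases hm with hm | hm <;> rcases h4' with h4' | h4' <;> rcases h0' with h0' | h0' <;>
        first
          | exact absurd (h4'.trans hm.symm) h4m
          | exact absurd (h0'.trans hm.symm) h0m
          | exact h0'.trans h4'.symm
    have hdv4 := small j (j + 4) (by omega) h40 h0ev
    have h2 : j + 4 - j = 4 := by omega
    rw [h2] at hdv4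
    have hle := Nat.le_of_dvd (by omega) hdv4
    have h34 : L = 3 ∨ L = 4 := by omega
    rcases h34 with h | h
    · rw [h] at hdv4
      omega
    · exact hL4 h
  · -- no turn: direction is constant
    push_neg at hturn
    have hper : ∀ i, a (i + L) = a i := by
      intro i
      show tmap k hk (w.getVert ((i + L) % L)) = tmap k hk (w.getVert (i % L))
      rw [Nat.add_mod_right]
    have hturn' : ∀ j, a (j + 2) ≠ a j := by
      intro j h
      have e1 : j + (L - 1) + 3 = (j + 2) + L := by omega
      have e2 : j + (L - 1) + 1 = j + L := by omega
      apply hturn (j + (L - 1))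
      rw [e1, e2, hper, hper, h]
    obtain ⟨e, he, hstep⟩ : ∃ e : Fin k, (e = 1 ∨ e = -1) ∧ ∀ i, a (i + 1) = a i + e := by
      rcases F3 0 with h0 | h0
      · refine ⟨1, Or.inl rfl, ?_⟩
        intro i
        induction i with
        | zero => exact h0
        | succ i ih =>
          rcases F3 (i + 1) with h | h
          · exact h
          · exfalso
            apply hturn' i
            have : a (i + 1 + 1) + 1 = a i + 1 := by rw [← h, ih]
            have h2 := add_right_cancel this
            rw [← h2]
      · refine ⟨-1, Or.inr rfl, ?_⟩
        intro i
        induction i with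
        | zero =>
          have : a 1 = a 0 - 1 := by rw [h0]; ring
          rw [this]; ring_nf
        | succ i ih =>
          rcases F3 (i + 1) with h | h
          · exfalso
            apply hturn' i
            rw [h, ih]
            ring_nf
          · have : a (i + 1 + 1) = a (i + 1) - 1 := by rw [h]; ring
            rw [this]; ring_nf
    have hform : ∀ i, a i = a 0 + (i : Fin k) * e := by
      intro i
      induction i with
      | zero => simp
      | succ i ih =>
        rw [hstep i, ih]
        push_cast
        ring
    have hLe : (L : Fin k) * e = 0 := by
      have h1 : a L = a 0 := by
        have := hper 0
        rwa [Nat.zero_add] at this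
      have h2 := hform L
      rw [h1] at h2
      exact (add_eq_left.mp h2.symm)
    have hLcast : (L : Fin k) = 0 := by
      rcases he with he | he
      · rwa [he, mul_one] at hLe
      · rw [he, mul_neg_one, neg_eq_zero] at hLe
        exact hLe
    have hkL : k ∣ L := Fin.natCast_eq_zero.mp hLcast
    -- find an even-class position i₀ ∈ {0,1}
    have key : ∀ i₀ : ℕ, (a i₀).val % 2 = 0 → False := by
      intro i₀ hev
      have hzz : a (i₀ + k) = a i₀ := by
        rw [hform (i₀ + k), hform i₀, Nat.cast_add, Fin.natCast_self]
        ring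
      have := small i₀ (i₀ + k) (by omega) hzz.symm hev
      have h2 : i₀ + k - i₀ = k := by omega
      rw [h2] at this
      exact hLk (Nat.dvd_antisymm this hkL)
    rcases hAP 0 with h | h
    · exact key 0 h
    · exact key 1 h

instance subgraphFinite {V : Type*} [Finite V] {G : SimpleGraph V} : Finite G.Subgraph := by
  apply Finite.of_injective (fun H => (H.verts, H.Adj))
  intro H H' h
  rw [Prod.mk.injEq] at h
  exact SimpleGraph.Subgraph.ext h.1 h.2

lemma copyCount_lower (k : ℕ) (hk : 2 ≤ k) {n : ℕ} (hn : k ≤ n) :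
    ((n - k) / (k / 2)) ^ (k / 2) ≤
      _root_.copyCount (cycleGraph k) (SimpleGraph.comap (tmap k hk (n := n)) (cycleGraph k)) := by
  rw [_root_.copyCount]
  have h1 : Nat.card (Fin (k / 2) → Fin ((n - k) / (k / 2))) = ((n - k) / (k / 2)) ^ (k / 2) := by
    simp [Nat.card_eq_fintype_card]
  rw [← h1]
  apply Nat.card_le_card_of_injective
    (fun c => (⟨csub k hk hn c, csub_iso k hk hn c⟩ :
      {G' : (SimpleGraph.comap (tmap k hk (n := n)) (cycleGraph k)).Subgraph //
        Nonempty (cycleGraph k ≃g G'.coe)}))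
  intro c c' h
  exact csub_injective k hk hn (Subtype.ext_iff.mp h)

lemma count_ineq (k n : ℕ) (hk : 2 ≤ k) (hn : 2 * k ≤ n) : n ≤ 2 * k * ((n - k) / (k / 2)) := by
  set s := k / 2 with hs
  set M := (n - k) / s with hM
  have hs1 : 1 ≤ s := by omega
  have h2s : 2 * s ≤ k := by omega
  have hdm := Nat.div_add_mod (n - k) s
  have hmod : (n - k) % s < s := Nat.mod_lt _ (by omega)
  set SM := s * M with hSM
  have hB : (2 * s) * M ≤ k * M := Nat.mul_le_mul_right _ h2s
  set KM := k * M with hKM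
  have hB' : 2 * SM ≤ KM := by
    have h2 : 2 * SM = 2 * s * M := by rw [hSM, Nat.mul_assoc]
    rw [h2]
    exact hB
  have goal2 : n ≤ 2 * KM := by omega
  calc n ≤ 2 * KM := goal2
    _ = 2 * k * M := by rw [hKM, Nat.mul_assoc]

theorem stmt10 (k : ℕ) (hk : 2 ≤ k) :
    ∃ c : ℝ, 0 < c ∧ ∀ l : ℕ, 3 ≤ l → l ≠ 4 → l ≠ k →
      ∃ N : ℕ, ∀ n ≥ N, ∃ G : SimpleGraph (Fin n),
        CycleFree G l ∧ c * (n : ℝ) ^ (k / 2) ≤ _root_.copyCount (cycleGraph k) G := by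
  refine ⟨(1 / (2 * (k:ℝ))) ^ (k / 2), by positivity, ?_⟩
  intro l h3 h4 hlk
  refine ⟨2 * k, fun n hn => ?_⟩
  refine ⟨SimpleGraph.comap (tmap k hk (n := n)) (cycleGraph k),
    blowup_cycleFree k n hk l h3 h4 hlk, ?_⟩
  have hkn : k ≤ n := by omega
  have hM := count_ineq k n hk hn
  set M := (n - k) / (k / 2) with hMdef
  have hcc := copyCount_lower k hk hkn
  have hstep1 : (1 / (2 * (k:ℝ))) ^ (k/2) * (n:ℝ) ^ (k/2) ≤ (M : ℝ) ^ (k/2) := by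
    rw [← mul_pow]
    apply pow_le_pow_left₀ (by positivity)
    rw [div_mul_eq_mul_div, one_mul, div_le_iff₀ (by positivity)]
    calc (n:ℝ) ≤ ((2*k*M : ℕ) : ℝ) := by exact_mod_cast hM
      _ = (M:ℝ) * (2*(k:ℝ)) := by push_cast; ring
  refine le_trans hstep1 ?_
  calc ((M:ℝ))^(k/2) = ((M^(k/2) : ℕ) : ℝ) := by push_cast; ring
    _ ≤ _ := by exact_mod_cast hcc
end

section
/- For every k ≥ 2 there is a constant c_k > 0 such that for every ℓ ≥ 3 with ℓ ≠ 4 and every sufficiently large n, there exists an n-vertex graph with no cycle of length ℓ containing at least c_k · n^{⌈(k+1)/2⌉} copies of the path P_k with k edges. -/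
open SimpleGraph

section WalkAux

variable {V : Type*} {G : SimpleGraph V}

lemma getVert_eq_support_getElem {u v : V} (p : G.Walk u v) :
    ∀ (i : ℕ) (hi : i ≤ p.length),
      p.getVert i = p.support[i]'(by rw [SimpleGraph.Walk.length_support]; omega) := by
  induction p with
  | nil =>
    intro i hi
    simp only [SimpleGraph.Walk.length_nil, Nat.le_zero] at hi
    subst hi
    simp [SimpleGraph.Walk.getVert]
  | cons ha q ih =>
    intro i hi
    cases i with
    | zero => simp [SimpleGraph.Walk.getVert]
    | succ j =>
      have hj : j ≤ q.length := by
        simp only [SimpleGraph.Walk.length_cons] at hi; omega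
      simpa [SimpleGraph.Walk.getVert_cons_succ] using ih j hj

lemma cycle_getVert_inj {v : V} {w : G.Walk v v} (hw : w.IsCycle)
    {i j : ℕ} (hi : i < w.length) (hj : j < w.length)
    (h : w.getVert i = w.getVert j) : i = j := by
  classical
  set L := w.length with hL
  have hL3 : 3 ≤ L := hw.three_le_length
  have hT : w.support.tail.Nodup := hw.support_nodup
  have hsupp : w.support = v :: w.support.tail := w.support_eq_cons
  have hslen : w.support.length = L + 1 := w.length_support
  have hTlen : w.support.tail.length = L := by
    rw [hsupp] at hslen
    simpa using hslen
  have key : ∀ (c : ℕ) (hc : c + 1 ≤ L),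
      w.getVert (c + 1) = w.support.tail[c]'(by omega) := by
    intro c hc
    have e0 := getVert_eq_support_getElem w (c + 1) hc
    have e1 : w.support[c+1]'(by omega) = (v :: w.support.tail)[c+1]'(by simp; omega) :=
      List.getElem_of_eq hsupp _
    have e2 : (v :: w.support.tail)[c+1]'(by simp; omega) = w.support.tail[c]'(by omega) :=
      List.getElem_cons_succ ..
    exact e0.trans (e1.trans e2)
  have h0L : w.getVert 0 = w.getVert L := by
    rw [SimpleGraph.Walk.getVert_zero, hL, SimpleGraph.Walk.getVert_length]
  set i' := if i = 0 then L else i with hi'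
  set j' := if j = 0 then L else j with hj'
  have hgi : w.getVert i' = w.getVert i := by
    by_cases h0 : i = 0 <;> simp [hi', h0, ← h0L]
  have hgj : w.getVert j' = w.getVert j := by
    by_cases h0 : j = 0 <;> simp [hj', h0, ← h0L]
  have hi1 : 1 ≤ i' ∧ i' ≤ L := by
    by_cases h0 : i = 0 <;> simp [hi', h0] <;> omega
  have hj1 : 1 ≤ j' ∧ j' ≤ L := by
    by_cases h0 : j = 0 <;> simp [hj', h0] <;> omega
  obtain ⟨ci, hci⟩ : ∃ c, i' = c + 1 := ⟨i' - 1, by omega⟩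
  obtain ⟨cj, hcj⟩ : ∃ c, j' = c + 1 := ⟨j' - 1, by omega⟩
  have hgeq : w.support.tail[ci]'(by omega) = w.support.tail[cj]'(by omega) := by
    rw [← key ci (by omega), ← key cj (by omega), ← hci, ← hcj, hgi, hgj, h]
  have hcij : ci = cj := (List.Nodup.getElem_inj_iff hT).mp hgeq
  by_cases h0 : i = 0 <;> by_cases h0' : j = 0 <;>
    simp [hi', hj', h0, h0'] at hci hcj <;> omega

/-- A graph in which every vertex has a numerical "position" such that adjacent vertices
have positions differing by exactly one and each odd position is occupied by at most one
vertex has no cycles of length other than 4. -/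
lemma cycleFree_of_position (G : SimpleGraph V) (p : V → ℕ)
    (hadj : ∀ u v, G.Adj u v → p u + 1 = p v ∨ p v + 1 = p u)
    (hodd : ∀ u v, p u = p v → p u % 2 = 1 → u = v)
    {l : ℕ} (hl3 : 3 ≤ l) (hl4 : l ≠ 4) : CycleFree G l := by
  intro v w hw hlen
  set L := l with hLdef
  have hwl : w.length = L := hlen
  have hL0 : 0 < L := by omega
  set f : ℕ → V := fun i => w.getVert (i % L) with hf
  set P : ℕ → ℕ := fun i => p (f i) with hP
  have hmod : ∀ i : ℕ, i % L < L := fun i => Nat.mod_lt _ hL0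
  have hper : ∀ i, f (i + L) = f i := by
    intro i; simp [hf, Nat.add_mod_right]
  have hadjf : ∀ i, G.Adj (f i) (f (i + 1)) := by
    intro i
    have h1 : i % L < w.length := by rw [hwl]; exact hmod i
    have h := w.adj_getVert_succ h1
    have he : w.getVert (i % L + 1) = f (i + 1) := by
      have hrw : (i + 1) % L = (i % L + 1) % L := (Nat.mod_add_mod i L 1).symm
      rcases Nat.lt_or_ge (i % L + 1) L with hc | hc
      · show _ = w.getVert ((i+1) % L)
        rw [hrw, Nat.mod_eq_of_lt hc]
      · have hc' : i % L + 1 = L := by have := hmod i; omega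
        have h2 : (i + 1) % L = 0 := by rw [hrw, hc', Nat.mod_self]
        show _ = w.getVert ((i+1) % L)
        rw [h2, SimpleGraph.Walk.getVert_zero, hc', ← hwl,
          SimpleGraph.Walk.getVert_length]
    rwa [he] at h
  have hstep : ∀ i, P i + 1 = P (i + 1) ∨ P (i + 1) + 1 = P i := fun i =>
    hadj _ _ (hadjf i)
  -- injectivity modulo L
  have hinj : ∀ i j : ℕ, f i = f j → i % L = j % L := by
    intro i j hfe
    exact cycle_getVert_inj hw (by rw [hwl]; exact hmod i) (by rw [hwl]; exact hmod j) hfe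
  have huniq : ∀ i j : ℕ, P i = P j → P i % 2 = 1 → i % L = j % L := by
    intro i j hpe ho
    exact hinj i j (hodd _ _ hpe ho)
  have hdvd : ∀ i j : ℕ, i ≤ j → i % L = j % L → L ∣ j - i := by
    intro i j hij hmd
    exact (Nat.modEq_iff_dvd' hij).mp hmd
  -- maximum position
  obtain ⟨i0, hi0mem, hmax0⟩ :=
    Finset.exists_max_image (Finset.range L) P ⟨0, Finset.mem_range.mpr hL0⟩
  have hPP : ∀ i, P i = P (i % L) := by
    intro i
    have : f i = f (i % L) := by
      show w.getVert (i % L) = w.getVert (i % L % L)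
      rw [Nat.mod_eq_of_lt (hmod i)]
    rw [hP]; simp only []; rw [this]
  have hmax : ∀ i, P i ≤ P i0 := by
    intro i
    rw [hPP i]
    exact hmax0 _ (Finset.mem_range.mpr (hmod i))
  have hPer : P (i0 + L) = P i0 := by rw [hP]; simp only []; rw [hper]
  -- neighbours of the maximum
  have hn1 : P (i0 + 1) + 1 = P i0 := by
    rcases hstep i0 with hc | hc
    · have := hmax (i0 + 1); omega
    · exact hc
  have hn2 : P (i0 + (L - 1)) + 1 = P i0 := by
    have he : i0 + (L - 1) + 1 = i0 + L := by omega
    rcases hstep (i0 + (L - 1)) with hc | hc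
    · rw [he, hPer] at hc; exact hc
    · rw [he, hPer] at hc; have := hmax (i0 + (L - 1)); omega
  -- dvd helper contradictions
  have hcontra : ∀ a b : ℕ, a ≤ b → a % L = b % L → b - a < L → a = b := by
    intro a b hab hm hlt
    have := hdvd a b hab hm
    rcases Nat.eq_zero_or_pos (b - a) with h0 | h0
    · omega
    · have := Nat.le_of_dvd h0 this; omega
  -- the max has odd position
  have hModd : P i0 % 2 = 1 := by
    by_contra he
    have heq : P (i0 + 1) = P (i0 + (L - 1)) := by omega
    have ho1 : P (i0 + 1) % 2 = 1 := by omega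
    have hmm := huniq _ _ heq ho1
    have : i0 + 1 = i0 + (L - 1) := hcontra _ _ (by omega) hmm (by omega)
    omega
  -- second neighbours
  have hn3 : P (i0 + 2) + 1 = P (i0 + 1) := by
    rcases hstep (i0 + 1) with hc | hc <;>
      rw [show i0 + 1 + 1 = i0 + 2 by omega] at hc
    · exfalso
      have heq : P (i0 + 2) = P i0 := by omega
      have hmm := huniq _ _ heq (by rw [heq]; exact hModd)
      have : i0 + 2 = i0 := hcontra i0 (i0 + 2) (by omega) hmm.symm (by omega) |>.symm
      omega
    · exact hc
  have hn4 : P (i0 + (L - 2)) + 1 = P (i0 + (L - 1)) := by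
    have he : i0 + (L - 2) + 1 = i0 + (L - 1) := by omega
    rcases hstep (i0 + (L - 2)) with hc | hc
    · rw [he] at hc; exact hc
    · exfalso
      rw [he] at hc
      have heq : P (i0 + (L - 2)) = P i0 := by omega
      have hmm := huniq _ _ heq (by rw [heq]; exact hModd)
      have : i0 ≤ i0 + (L - 2) := by omega
      have : i0 = i0 + (L - 2) := hcontra i0 (i0 + (L - 2)) this hmm.symm (by omega)
      omega
  -- conclude
  have heq : P (i0 + 2) = P (i0 + (L - 2)) := by omega
  have ho2 : P (i0 + 2) % 2 = 1 := by omega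
  have hmm := huniq _ _ heq ho2
  rcases Nat.lt_or_ge (i0 + 2) (i0 + (L - 2)) with hc | hc
  · have := hcontra _ _ (by omega) hmm (by omega)
    omega
  · have := hcontra _ _ (by omega : i0 + (L - 2) ≤ i0 + 2) hmm.symm (by omega)
    omega

end WalkAux

/-- position of a vertex in the blown-up path -/
def posF (s t x : ℕ) : ℕ := if x < s then 2 * x + 1 else 2 * ((x - s) % t)

/-- The blow-up of a path: vertices `x < s` are the (singleton) odd positions; the
remaining vertices are distributed among `t` even positions. -/
def blowG (n s t : ℕ) : SimpleGraph (Fin n) where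
  Adj u v := posF s t u.val + 1 = posF s t v.val ∨ posF s t v.val + 1 = posF s t u.val
  symm := ⟨fun u v h => Or.symm h⟩
  loopless := ⟨fun u h => by omega⟩

lemma blowG_adj {n s t : ℕ} {u v : Fin n} :
    (blowG n s t).Adj u v ↔
      posF s t u.val + 1 = posF s t v.val ∨ posF s t v.val + 1 = posF s t u.val := Iff.rfl

lemma posF_odd_inj {s t : ℕ} {x y : ℕ} (h : posF s t x = posF s t y)
    (ho : posF s t x % 2 = 1) : x = y := by
  rcases Nat.lt_or_ge x s with hx | hx
  · rcases Nat.lt_or_ge y s with hy | hy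
    · simp only [posF, if_pos hx, if_pos hy] at h; omega
    · simp only [posF, if_pos hx, if_neg (Nat.not_lt.2 hy)] at h ho; omega
  · simp only [posF, if_neg (Nat.not_lt.2 hx)] at ho; omega

section Count

variable {n k t s m : ℕ}

/-- the chosen vertex representing path-position `p`, where `g` chooses a vertex in
each even blob -/
def vert (s t : ℕ) (g : ℕ → ℕ) (p : ℕ) : ℕ :=
  if p % 2 = 1 then p / 2 else s + p / 2 + t * g (p / 2)

lemma vert_lt (ht : 2 * t = k + 2 ∨ 2 * t = k + 1) (hs : t + s = k + 1) (hm : 0 < m)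
    (hmn : s + t * m ≤ n) {g : ℕ → ℕ} (hg : ∀ j, g j < m) {p : ℕ} (hp : p ≤ k) :
    vert s t g p < n := by
  unfold vert
  split
  · omega
  · have h1 : p / 2 < t := by omega
    have h2 : t * (g (p / 2) + 1) ≤ t * m := Nat.mul_le_mul_left t (hg (p / 2))
    have h3 : t * (g (p / 2) + 1) = t * g (p / 2) + t := by ring
    omega

lemma posF_vert (ht : 2 * t = k + 2 ∨ 2 * t = k + 1) (hs : t + s = k + 1) (hm : 0 < m)
    {g : ℕ → ℕ} (hg : ∀ j, g j < m) {p : ℕ} (hp : p ≤ k) :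
    posF s t (vert s t g p) = p := by
  unfold vert posF
  by_cases hpo : p % 2 = 1
  · rw [if_pos hpo, if_pos (by omega : p / 2 < s)]
    omega
  · rw [if_neg hpo, if_neg (by omega : ¬ (s + p / 2 + t * g (p / 2) < s))]
    have h0 : s + p / 2 + t * g (p / 2) - s = p / 2 + t * g (p / 2) := by omega
    rw [h0, Nat.add_mul_mod_self_left, Nat.mod_eq_of_lt (by omega : p / 2 < t)]
    omega

end Count

section Main

variable {n k t s m : ℕ}

/-- choice function extended to `ℕ` -/
def gOf (t m : ℕ) (f : Fin t → Fin m) : ℕ → ℕ := fun j => if h : j < t then (f ⟨j, h⟩).val else 0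

lemma gOf_lt (hm : 0 < m) (f : Fin t → Fin m) : ∀ j, gOf t m f j < m := by
  intro j; unfold gOf; split
  · exact (f _).isLt
  · exact hm

lemma copy_lower (ht : 2 * t = k + 2 ∨ 2 * t = k + 1) (hs : t + s = k + 1) (hm : 0 < m)
    (hmn : s + t * m ≤ n) :
    m ^ t ≤ _root_.copyCount (pathGraph (k + 1)) (blowG n s t) := by
  classical
  have htpos : 0 < t := by omega
  set G := blowG n s t with hG
  -- the embedded path for a choice function f
  have hplt : ∀ p : Fin (k + 1), (p : ℕ) ≤ k := fun p => by omega
  let σ : (Fin t → Fin m) → Fin (k + 1) → Fin n := fun f p =>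
    ⟨vert s t (gOf t m f) p.val, vert_lt ht hs hm hmn (gOf_lt hm f) (hplt p)⟩
  have hpos : ∀ f p, posF s t ((σ f p) : ℕ) = (p : ℕ) := fun f p =>
    posF_vert ht hs hm (gOf_lt hm f) (hplt p)
  have hσinj : ∀ f, Function.Injective (σ f) := by
    intro f p q h
    have h2 : posF s t ((σ f p) : ℕ) = posF s t ((σ f q) : ℕ) := by rw [h]
    rw [hpos, hpos] at h2
    exact Fin.ext h2
  let S : (Fin t → Fin m) → G.Subgraph := fun f =>
    (⊤ : G.Subgraph).induce (Set.range (σ f))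
  have hiso : ∀ f, Nonempty (pathGraph (k + 1) ≃g (S f).coe) := by
    intro f
    refine ⟨⟨Equiv.ofInjective (σ f) (hσinj f), ?_⟩⟩
    intro a b
    change σ f a ∈ Set.range (σ f) ∧ σ f b ∈ Set.range (σ f) ∧
      G.Adj (σ f a) (σ f b) ↔ (pathGraph (k + 1)).Adj a b
    rw [hG, blowG_adj, hpos, hpos, pathGraph_adj]
    simp [Set.mem_range_self]
  have hSinj : Function.Injective S := by
    intro f f' hff
    have hv : Set.range (σ f) = Set.range (σ f') := by
      have := congrArg SimpleGraph.Subgraph.verts hff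
      simpa [S] using this
    funext j
    have h2j : 2 * (j : ℕ) ≤ k := by have := j.isLt; omega
    set p : Fin (k + 1) := ⟨2 * (j : ℕ), by omega⟩ with hp
    have hmem : σ f p ∈ Set.range (σ f') := by rw [← hv]; exact Set.mem_range_self _
    obtain ⟨q, hq⟩ := hmem
    have hqp : (q : ℕ) = (p : ℕ) := by
      have h1 : posF s t ((σ f' q) : ℕ) = posF s t ((σ f p) : ℕ) := by rw [hq]
      rw [hpos, hpos] at h1
      exact h1
    have hq' : σ f' p = σ f p := by
      rw [← hq]; congr 1; exact (Fin.ext hqp).symm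
    have hvv : vert s t (gOf t m f') (p : ℕ) = vert s t (gOf t m f) (p : ℕ) :=
      congrArg Fin.val hq'
    have hpv : (p : ℕ) = 2 * (j : ℕ) := rfl
    have hpe : ((p : ℕ)) % 2 = 0 := by omega
    have hhalf : (p : ℕ) / 2 = (j : ℕ) := by omega
    unfold vert at hvv
    rw [if_neg (by omega), if_neg (by omega), hhalf] at hvv
    have : gOf t m f' (j : ℕ) = gOf t m f (j : ℕ) := by
      have := Nat.eq_of_mul_eq_mul_left htpos (by omega :
        t * gOf t m f' (j : ℕ) = t * gOf t m f (j : ℕ))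
      exact this
    unfold gOf at this
    rw [dif_pos j.isLt, dif_pos j.isLt] at this
    exact (Fin.ext this).symm
  -- finiteness of subgraphs
  haveI : Finite G.Subgraph := by
    refine Finite.of_injective (fun H : G.Subgraph => (H.verts, H.Adj)) ?_
    intro a b hab
    rw [Prod.ext_iff] at hab
    exact SimpleGraph.Subgraph.ext hab.1 hab.2
  let F : (Fin t → Fin m) → {G' : G.Subgraph // Nonempty (pathGraph (k + 1) ≃g G'.coe)} :=
    fun f => ⟨S f, hiso f⟩
  have hFinj : Function.Injective F := by
    intro a b hab
    exact hSinj (congrArg Subtype.val hab)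
  have hcard := Nat.card_le_card_of_injective F hFinj
  have : Nat.card (Fin t → Fin m) = m ^ t := by
    simp [Nat.card_eq_fintype_card]
  rw [this] at hcard
  exact hcard

end Main

theorem stmt11 (k : ℕ) (hk : 2 ≤ k) :
    ∃ c : ℝ, 0 < c ∧ ∀ l : ℕ, 3 ≤ l → l ≠ 4 →
      ∃ N : ℕ, ∀ n ≥ N, ∃ G : SimpleGraph (Fin n),
        CycleFree G l ∧ c * (n : ℝ) ^ ((k + 2) / 2) ≤ _root_.copyCount (pathGraph (k + 1)) G := by
  set t := (k + 2) / 2 with htdef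
  refine ⟨(1 / (3 * (k + 1) : ℝ)) ^ t, by positivity, ?_⟩
  intro l hl3 hl4
  refine ⟨4 * (k + 1), ?_⟩
  intro n hn
  set s := (k + 1) - t with hsdef
  have ht : 2 * t = k + 2 ∨ 2 * t = k + 1 := by omega
  have hs : t + s = k + 1 := by omega
  have htpos : 0 < t := by omega
  set m := (n - s) / t with hmdef
  have hm : 0 < m := by
    rw [hmdef]
    exact Nat.div_pos (by omega) htpos
  have hmn : s + t * m ≤ n := by
    have h1 : m * t ≤ n - s := by rw [hmdef]; exact Nat.div_mul_le_self (n - s) t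
    have h2 : t * m = m * t := Nat.mul_comm _ _
    omega
  refine ⟨blowG n s t, ?_, ?_⟩
  · exact cycleFree_of_position _ (fun u => posF s t u.val) (fun u v h => h)
      (fun u v h ho => Fin.ext (posF_odd_inj h ho)) hl3 hl4
  · have hcopy := copy_lower ht hs hm hmn
    have hup : n ≤ 3 * (k + 1) * m := by
      have h1 : n - s < t * (m + 1) := by
        rw [hmdef]; exact Nat.lt_mul_div_succ _ htpos
      have e1 : t * (m + 1) ≤ (k + 1) * (m + 1) := Nat.mul_le_mul_right _ (by omega)
      have e2 : (k + 1) * (m + 1) + (k + 1) = (k + 1) * (m + 2) := by ring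
      have e3 : (k + 1) * (m + 2) ≤ (k + 1) * (3 * m) := Nat.mul_le_mul_left _ (by omega)
      have e4 : (k + 1) * (3 * m) = 3 * (k + 1) * m := by ring
      omega
    have hc1 : (1 / (3 * ((k : ℝ) + 1))) * n ≤ (m : ℝ) := by
      rw [div_mul_eq_mul_div, one_mul, div_le_iff₀ (by positivity)]
      calc (n : ℝ) ≤ 3 * (k + 1) * m := by exact_mod_cast hup
        _ = m * (3 * ((k : ℝ) + 1)) := by ring
    calc (1 / (3 * ((k : ℕ) + 1) : ℝ)) ^ t * (n : ℝ) ^ t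
        = ((1 / (3 * ((k : ℝ) + 1))) * n) ^ t := by
          rw [mul_pow]
      _ ≤ (m : ℝ) ^ t := pow_le_pow_left₀ (by positivity) hc1 t
      _ = ((m ^ t : ℕ) : ℝ) := by push_cast; ring
      _ ≤ _root_.copyCount (pathGraph (k + 1)) (blowG n s t) := by exact_mod_cast hcopy
end

section
/- Let q be a prime power, let F be the field with q elements, and let G be the graph on vertex set F² \ {(0,0)} with (a,b) adjacent to (c,d) if and only if ac + bd = 1 (ignoring loops). Then G contains no cycle of length 4. -/
open SimpleGraph

/-- The Erdős–Rényi polarity graph: vertices are the nonzero points of `F²`,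
with `(a,b)` adjacent to `(c,d)` iff `a*c + b*d = 1` (loops removed). -/
def polarityGraph (F : Type*) [Field F] : SimpleGraph {p : F × F // p ≠ 0} where
  Adj u v := u ≠ v ∧ u.1.1 * v.1.1 + u.1.2 * v.1.2 = 1
  symm := by
    constructor
    rintro u v ⟨h1, h2⟩
    exact ⟨h1.symm, by linear_combination h2⟩
  loopless := ⟨fun u h => h.1 rfl⟩



lemma key13 {F : Type} [Field F] {v1 v2 b1 b2 a1 a2 c1 c2 : F}
    (h1 : v1*a1+v2*a2=1) (h3 : v1*c1+v2*c2=1) (h2 : b1*a1+b2*a2=1) (h4 : b1*c1+b2*c2=1)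
    (hac : ¬(a1 = c1 ∧ a2 = c2)) : v1 = b1 ∧ v2 = b2 := by
  by_cases hD : a1*c2 - a2*c1 = 0
  · exfalso; apply hac
    constructor
    · linear_combination c1*h1 - a1*h3 + v2*hD
    · linear_combination c2*h1 - a2*h3 - v1*hD
  · constructor
    · have h : (a1*c2-a2*c1)*(v1-b1) = 0 := by
        linear_combination c2*h1 - a2*h3 - c2*h2 + a2*h4
      rcases mul_eq_zero.mp h with h | h
      · exact absurd h hD
      · linear_combination h
    · have h : (a1*c2-a2*c1)*(v2-b2) = 0 := by
        linear_combination (-c1)*h1 + a1*h3 + c1*h2 - a1*h4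
      rcases mul_eq_zero.mp h with h | h
      · exact absurd h hD
      · linear_combination h

theorem stmt13 (q : ℕ) (hq : IsPrimePow q) (F : Type) [Field F] [Fintype F]
    (hF : Fintype.card F = q) :
    CycleFree (polarityGraph F) 4 := by
  intro v w hcyc hlen
  cases w with
  | nil => simp at hlen
  | cons h1 p1 =>
  cases p1 with
  | nil => simp at hlen
  | cons h2 p2 =>
  cases p2 with
  | nil => simp at hlen
  | cons h3 p3 =>
  cases p3 with
  | nil => simp at hlen
  | cons h4 p4 =>
  cases p4 with
  | cons h5 p5 => simp [SimpleGraph.Walk.length_cons] at hlen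
  | nil =>
    have hnd := hcyc.2
    simp [SimpleGraph.Walk.support_cons] at hnd
    have hk := key13 h1.2 (by linear_combination h4.2) (by linear_combination h2.2) h3.2
      (fun h => hnd.1.2.1 (Subtype.ext (Prod.ext h.1 h.2)))
    exact hnd.2.1.2 (Subtype.ext (Prod.ext hk.1 hk.2)).symm
end

section
/- For every ℓ ≥ 3, ex(n, C_3, C_{2ℓ}) = Ω(ex_bip(n, {C_4, C_6, …, C_{2ℓ}})): more precisely, for every n there is a 3n-vertex graph with no cycle of length 2ℓ containing at least (1/2)·z(n) triangles, where z(n) is the maximum number of edges in an n×n bipartite graph with no cycle of length 2t for any 2 ≤ t ≤ ℓ. -/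
open SimpleGraph

/-- The maximum number of edges in an `n × n` bipartite graph containing no cycle of
length `2t` for any `2 ≤ t ≤ l`. -/
noncomputable def zBip (n l : ℕ) : ℕ :=
  sSup {m | ∃ H : SimpleGraph (Fin n ⊕ Fin n),
    (∀ a b, ¬ H.Adj (Sum.inl a) (Sum.inl b)) ∧
    (∀ a b, ¬ H.Adj (Sum.inr a) (Sum.inr b)) ∧
    (∀ t, 2 ≤ t → t ≤ l → CycleFree H (2 * t)) ∧
    m = Nat.card H.edgeSet}

open List

theorem chain_cons' {α : Type*} {R : α → α → Prop} {a b : α} {l : List α} :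
    List.Chain R a (b :: l) ↔ R a b ∧ List.Chain R b l := List.isChain_cons_cons

theorem chain_singleton' {α : Type*} {R : α → α → Prop} {a b : α} :
    List.Chain R a [b] ↔ R a b := List.isChain_pair

theorem chain_split' {α : Type*} {R : α → α → Prop} {a b : α} {l₁ l₂ : List α} :
    List.Chain R a (l₁ ++ b :: l₂) ↔ List.Chain R a (l₁ ++ [b]) ∧ List.Chain R b l₂ :=
  List.isChain_cons_split

variable {W : Type*} {G : SimpleGraph W}

/-- A list-cycle: `x :: L` lists the vertices of a cycle in order. -/
def IsCyc (G : SimpleGraph W) (x : W) (L : List W) : Prop :=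
  List.Chain G.Adj x (L ++ [x]) ∧ (x :: L).Nodup

lemma IsCyc.rotate {x b : W} {L l₁ l₂ : List W} (h : IsCyc G x L)
    (hd : x :: L = l₁ ++ b :: l₂) : IsCyc G b (l₂ ++ l₁) ∧ (b :: (l₂ ++ l₁)).Perm (x :: L) := by
  obtain ⟨hc, hn⟩ := h
  have hperm : (b :: (l₂ ++ l₁)).Perm (x :: L) := by
    rw [hd]
    calc (b :: (l₂ ++ l₁)) = (b :: l₂) ++ l₁ := by simp
    _ ~ l₁ ++ (b :: l₂) := List.perm_append_comm
  refine ⟨⟨?_, hperm.symm.nodup hn⟩, hperm⟩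
  rcases l₁ with _ | ⟨y, l₁⟩
  · simp only [List.nil_append, List.cons.injEq] at hd
    obtain ⟨rfl, rfl⟩ := hd
    simpa using hc
  · simp only [List.cons_append, List.cons.injEq] at hd
    obtain ⟨rfl, hd⟩ := hd
    rw [hd] at hc
    have hc' : List.Chain G.Adj x (l₁ ++ b :: (l₂ ++ [x])) := by simpa using hc
    rw [chain_split'] at hc'
    obtain ⟨h1, h2⟩ := hc'
    have : List.Chain G.Adj b (l₂ ++ x :: (l₁ ++ [b])) := by
      rw [chain_split']
      exact ⟨h2, by simpa using h1⟩
    simpa using this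

/-- Turn a chain of adjacencies into a walk. -/
def chainWalk (G : SimpleGraph W) : (L : List W) → (u v : W) →
    List.Chain G.Adj u (L ++ [v]) → G.Walk u v
  | [], _, _, h => SimpleGraph.Walk.cons (List.rel_of_isChain_cons_cons h) SimpleGraph.Walk.nil
  | (x :: L), u, v, h =>
      SimpleGraph.Walk.cons (List.rel_of_chain_cons h)
        (chainWalk G L x v (List.chain_of_chain_cons h))

lemma chainWalk_length : ∀ (L : List W) (u v : W) (h), (chainWalk G L u v h).length = L.length + 1
  | [], _, _, _ => rfl
  | (x :: L), u, v, h => by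
      have := chainWalk_length L x v (List.chain_of_chain_cons h)
      simp [chainWalk, this]

lemma chainWalk_support : ∀ (L : List W) (u v : W) (h),
    (chainWalk G L u v h).support = u :: (L ++ [v])
  | [], _, _, _ => rfl
  | (x :: L), u, v, h => by
      have := chainWalk_support L x v (List.chain_of_chain_cons h)
      simp [chainWalk, this]

lemma chainWalk_edge_notmem {x y : W} : ∀ (L : List W) (u : W) (h), x ∉ u :: L →
    (u :: L).getLast (by simp) ≠ y → s(x, y) ∉ (chainWalk G L u x h).edges
  | [], u, h, hx, hy => by
      simp only [chainWalk, SimpleGraph.Walk.edges_cons, SimpleGraph.Walk.edges_nil]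
      intro hmem
      simp only [List.mem_singleton, Sym2.eq_iff] at hmem
      rcases hmem with ⟨h1, h2⟩ | ⟨h1, h2⟩
      · exact hx (by simp [h1])
      · exact hy (by simp [h2])
  | (c :: L), u, h, hx, hy => by
      simp only [chainWalk, SimpleGraph.Walk.edges_cons, List.mem_cons]
      rintro (hmem | hmem)
      · rw [Sym2.eq_iff] at hmem
        rcases hmem with ⟨h1, h2⟩ | ⟨h1, h2⟩
        · exact hx (by simp [h1])
        · exact hx (by simp [h1])
      · refine chainWalk_edge_notmem L c _ (by simp_all) ?_ hmem
        rw [List.getLast_cons_cons] at hy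
        exact hy

/-- A list-cycle of length at least 3 gives a genuine cycle walk. -/
lemma IsCyc.exists_cycle {x : W} {L : List W} (h : IsCyc G x L) (hL : 2 ≤ L.length) :
    ∃ w : G.Walk x x, w.IsCycle ∧ w.length = L.length + 1 := by
  obtain ⟨hc, hn⟩ := h
  rcases L with _ | ⟨x₁, L'⟩
  · simp at hL
  have hadj : G.Adj x x₁ := List.rel_of_chain_cons hc
  have hc' : List.Chain G.Adj x₁ (L' ++ [x]) := List.chain_of_chain_cons hc
  have hx_notmem : x ∉ x₁ :: L' := (List.nodup_cons.1 hn).1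
  have hnodup : (x₁ :: L').Nodup := (List.nodup_cons.1 hn).2
  set p := chainWalk G L' x₁ x hc' with hp
  refine ⟨SimpleGraph.Walk.cons hadj p, ?_, ?_⟩
  · rw [SimpleGraph.Walk.cons_isCycle_iff]
    constructor
    · apply SimpleGraph.Walk.IsPath.mk'
      rw [chainWalk_support, show x₁ :: (L' ++ [x]) = (x₁ :: L') ++ [x] by simp,
        List.nodup_append]
      refine ⟨hnodup, by simp, ?_⟩
      intro a ha b hax hab
      rw [List.mem_singleton] at hax
      subst hax
      exact hx_notmem (hab ▸ ha)
    · apply chainWalk_edge_notmem _ _ _ hx_notmem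
      rcases L' with _ | ⟨c, L''⟩
      · simp at hL
      · intro hlast
        have hmem : (c :: L'').getLast (by simp) ∈ c :: L'' := List.getLast_mem _
        rw [List.getLast_cons_cons] at hlast
        rw [hlast] at hmem
        exact (List.nodup_cons.1 hnodup).1 hmem
  · simp only [SimpleGraph.Walk.length_cons, hp, chainWalk_length]
    simp

/-- A cycle walk gives a list-cycle. -/
lemma cyc_of_walk {v : W} {w : G.Walk v v} (hw : w.IsCycle) :
    ∃ L : List W, IsCyc G v L ∧ L.length + 1 = w.length := by
  have h3 : 3 ≤ w.length := hw.three_le_length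
  rcases w with _ | ⟨hadj, p⟩
  · simp at h3
  · rename_i u
    have hps : p.support.dropLast ++ [v] = p.support := by
      conv_rhs => rw [← List.dropLast_append_getLast (l := p.support) (by simp),
        SimpleGraph.Walk.getLast_support]
    refine ⟨p.support.dropLast, ⟨?_, ?_⟩, ?_⟩
    · have hchain : List.Chain G.Adj v p.support := SimpleGraph.Walk.isChain_adj_cons_support hadj p
      rw [hps]; exact hchain
    · have hnd : (SimpleGraph.Walk.cons hadj p).support.tail.Nodup := hw.support_nodup
      have htail : (SimpleGraph.Walk.cons hadj p).support.tail = p.support := by simp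
      rw [htail, ← hps, List.nodup_append] at hnd
      rw [List.nodup_cons]
      exact ⟨fun hmem => hnd.2.2 _ hmem _ (by simp) rfl, hnd.1⟩
    · have h1 : p.support.length = p.length + 1 := SimpleGraph.Walk.length_support p
      have h2 : p.support.dropLast.length = p.support.length - 1 := List.length_dropLast
      simp only [SimpleGraph.Walk.length_cons]
      omega


section Tri
variable {n : ℕ}

/-- Vertex type: two copies of the left side plus the right side. -/
abbrev VV (n : ℕ) := Fin n ⊕ (Fin n ⊕ Fin n)

def pr : VV n → Fin n ⊕ Fin n := Sum.elim Sum.inl (Sum.elim Sum.inl Sum.inr)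

def mate : VV n → VV n :=
  Sum.elim (fun a => Sum.inr (Sum.inl a)) (Sum.elim (fun a => Sum.inl a) (fun b => Sum.inr (Sum.inr b)))

def vside : VV n → Bool := Sum.elim (fun _ => false) (Sum.elim (fun _ => false) (fun _ => true))

@[simp] lemma mate_mate (x : VV n) : mate (mate x) = x := by
  rcases x with a | (a | b) <;> rfl

@[simp] lemma pr_mate (x : VV n) : pr (mate x) = pr x := by
  rcases x with a | (a | b) <;> rfl

@[simp] lemma vside_mate (x : VV n) : vside (mate x) = vside x := by
  rcases x with a | (a | b) <;> rfl

lemma mate_eq_self_iff {x : VV n} : mate x = x ↔ vside x = true := by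
  rcases x with a | (a | b) <;> simp [mate, vside]

lemma pr_eq_cases {x y : VV n} (h : pr x = pr y) : y = x ∨ y = mate x := by
  rcases x with a | (a | b) <;> rcases y with a' | (a' | b') <;>
    simp_all [pr, mate]

lemma vside_eq_of_pr_eq {x y : VV n} (h : pr x = pr y) : vside x = vside y := by
  rcases pr_eq_cases h with rfl | rfl <;> simp

variable (H : SimpleGraph (Fin n ⊕ Fin n))

/-- The tripartite graph: each left vertex of `H` doubled into an edge. -/
def triG : SimpleGraph (VV n) where
  Adj x y := (y = mate x ∧ x ≠ y) ∨ H.Adj (pr x) (pr y)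
  symm := by
    refine ⟨?_⟩
    rintro x y (⟨rfl, hne⟩ | h)
    · exact Or.inl ⟨(mate_mate x).symm, by simpa [eq_comm] using hne⟩
    · exact Or.inr h.symm
  loopless := by
    refine ⟨?_⟩
    rintro x (⟨h1, h2⟩ | h)
    · exact h2 rfl
    · exact H.loopless.irrefl _ h

variable {H}

lemma triG_adj_of_H {x y : VV n} (h : H.Adj (pr x) (pr y)) : (triG H).Adj x y := Or.inr h

lemma triG_H_of_adj {x y : VV n} (h : (triG H).Adj x y) (hm : y ≠ mate x) :
    H.Adj (pr x) (pr y) := by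
  rcases h with ⟨h1, _⟩ | h
  · exact absurd h1 hm
  · exact h

variable (h1 : ∀ a b, ¬ H.Adj (Sum.inl a) (Sum.inl b))
    (h2 : ∀ a b, ¬ H.Adj (Sum.inr a) (Sum.inr b))

include h1 h2 in
lemma vside_ne_of_H {x y : VV n} (h : H.Adj (pr x) (pr y)) : vside x ≠ vside y := by
  rcases x with a | (a | b) <;> rcases y with a' | (a' | b') <;>
    simp_all [pr, vside] <;> first
      | exact h1 _ _ h
      | exact h2 _ _ h

include h1 h2 in
lemma vside_flip {x y : VV n} (h : (triG H).Adj x y) (hm : y ≠ mate x) :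
    vside y = !(vside x) := by
  have := vside_ne_of_H h1 h2 (triG_H_of_adj h hm)
  cases hx : vside x <;> cases hy : vside y <;> simp_all

end Tri


lemma chain_flip_parity {α : Type*} (f : α → Bool) :
    ∀ (l : List α) (u v : α), List.Chain (fun a b => f a ≠ f b) u (l ++ [v]) →
      (f v = f u ↔ Even (l.length + 1))
  | [], u, v, h => by
    rw [List.nil_append, chain_singleton'] at h
    simp [Ne.symm h]
  | (c :: l), u, v, h => by
    rw [List.cons_append, chain_cons'] at h
    obtain ⟨h1, hc⟩ := h
    have h2 := chain_flip_parity f l c v hc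
    have hb : ∀ (a b c : Bool), b ≠ a → ((c = a) ↔ ¬ (c = b)) := by decide
    have hiff : (f v = f u) ↔ ¬ (f v = f c) := hb _ _ _ (Ne.symm h1)
    rw [hiff, h2]
    simp only [List.length_cons]
    rw [Nat.even_add_one (n := l.length + 1)]
section Tri2
variable {n : ℕ} {H : SimpleGraph (Fin n ⊕ Fin n)}

lemma chain_to_H (S : List (VV n)) (hbad : ∀ y ∈ S, mate y = y ∨ mate y ∉ S) :
    ∀ (lc : List (VV n)) (u : VV n), List.Chain (triG H).Adj u lc →
      u ∈ S → (∀ y ∈ lc, y ∈ S) →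
      List.Chain (fun a b => H.Adj (pr a) (pr b)) u lc
  | [], u, _, _, _ => List.Chain.nil
  | (c :: lc), u, hch, huS, hmem => by
    rw [chain_cons'] at hch ⊢
    obtain ⟨hadj, hch⟩ := hch
    have hcS : c ∈ S := hmem c (by simp)
    refine ⟨?_, chain_to_H S hbad lc c hch hcS (fun y hy => hmem y (by simp [hy]))⟩
    apply triG_H_of_adj hadj
    intro hcm
    rcases hbad u huS with hmu | hmu
    · rw [hcm, hmu] at hadj; exact (triG H).loopless.irrefl u hadj
    · rw [hcm] at hcS; exact hmu hcS

lemma surgery1 {y : VV n} {Q : List (VV n)} (h : IsCyc (triG H) y (mate y :: Q))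
    (hQ : Q ≠ []) : IsCyc (triG H) y Q := by
  obtain ⟨hc, hn⟩ := h
  have hA : y ∉ mate y :: Q := (List.nodup_cons.1 hn).1
  have hB : (mate y :: Q).Nodup := (List.nodup_cons.1 hn).2
  rcases Q with _ | ⟨q0, Q'⟩
  · exact absurd rfl hQ
  rw [List.cons_append, chain_cons', List.cons_append, chain_cons'] at hc
  obtain ⟨hym, hmq, hcq⟩ := hc
  have hq0y : q0 ≠ y := by
    intro h; exact hA (by rw [← h]; simp)
  have hq0m : q0 ≠ mate y := by
    intro h; exact (List.nodup_cons.1 hB).1 (by rw [← h]; simp)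
  have hH : H.Adj (pr (mate y)) (pr q0) := by
    apply triG_H_of_adj hmq
    rw [mate_mate]; exact hq0y
  rw [pr_mate] at hH
  refine ⟨?_, ?_⟩
  · rw [List.cons_append, chain_cons']
    exact ⟨triG_adj_of_H hH, hcq⟩
  · simp only [List.nodup_cons] at hn ⊢
    tauto

lemma surgery2 {y : VV n} {P Q : List (VV n)} (h : IsCyc (triG H) y (P ++ mate y :: Q))
    (hm : mate y ≠ y) (hP : P ≠ []) (hQ : Q ≠ []) :
    IsCyc (triG H) y P ∧ IsCyc (triG H) y Q := by
  obtain ⟨hc, hn⟩ := h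
  have hc' : List.Chain (triG H).Adj y (P ++ mate y :: (Q ++ [y])) := by
    simpa using hc
  rw [chain_split'] at hc'
  obtain ⟨hcP, hcQ⟩ := hc'
  have hnP : (y :: P).Nodup := by
    refine List.Nodup.sublist ?_ hn
    exact List.Sublist.cons₂ y (List.sublist_append_left P _)
  have hnQ : (y :: Q).Nodup := by
    refine List.Nodup.sublist ?_ hn
    refine List.Sublist.cons₂ y ?_
    exact List.Sublist.trans (List.sublist_cons_self _ _) (List.sublist_append_right P _)
  constructor
  · -- replace trailing mate y by y
    rcases List.eq_nil_or_concat P with rfl | ⟨P₀, plast, hconc⟩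
    · exact absurd rfl hP
    have hPe : P = P₀ ++ [plast] := by simpa using hconc
    rw [hPe] at hcP hnP
    have hc2 : List.Chain (triG H).Adj y (P₀ ++ plast :: [mate y]) := by simpa using hcP
    rw [chain_split'] at hc2
    obtain ⟨hc3, hc4⟩ := hc2
    have hadj : (triG H).Adj plast (mate y) := chain_singleton'.1 hc4
    have hplast : plast ≠ y := by
      intro h
      exact (List.nodup_cons.1 hnP).1 (by rw [← h]; simp)
    have hH : H.Adj (pr plast) (pr y) := by
      have := triG_H_of_adj hadj (by
        intro heq
        apply hplast
        have := congrArg mate heq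
        rw [mate_mate, mate_mate] at this
        exact this.symm)
      rwa [pr_mate] at this
    rw [hPe, IsCyc]
    refine ⟨?_, hnP⟩
    have : List.Chain (triG H).Adj y (P₀ ++ plast :: [y]) := by
      rw [chain_split']
      exact ⟨hc3, chain_singleton'.2 (triG_adj_of_H hH)⟩
    simpa using this
  · rcases Q with _ | ⟨q0, Q'⟩
    · exact absurd rfl hQ
    rw [List.cons_append, chain_cons'] at hcQ
    obtain ⟨hmq, hcq⟩ := hcQ
    have hq0y : q0 ≠ y := by
      intro h
      exact (List.nodup_cons.1 hnQ).1 (by rw [← h]; simp)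
    have hH : H.Adj (pr (mate y)) (pr q0) := by
      apply triG_H_of_adj hmq
      rw [mate_mate]; exact hq0y
    rw [pr_mate] at hH
    exact ⟨by rw [List.cons_append, chain_cons']; exact ⟨triG_adj_of_H hH, hcq⟩, hnQ⟩

end Tri2
section Master
variable {n l : ℕ} {H : SimpleGraph (Fin n ⊕ Fin n)}

lemma master (hl : 3 ≤ l)
    (h1 : ∀ a b, ¬ H.Adj (Sum.inl a) (Sum.inl b))
    (h2 : ∀ a b, ¬ H.Adj (Sum.inr a) (Sum.inr b))
    (h3 : ∀ t, 2 ≤ t → t ≤ l → CycleFree H (2 * t)) :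
    ∀ m : ℕ, ∀ (x : VV n) (L : List (VV n)), IsCyc (triG H) x L → L.length + 1 = m →
      m ≤ 2 * l →
      (5 ≤ m → False) ∧ (3 ≤ m → vside x = false → mate x ∉ x :: L → False) := by
  intro m
  induction m using Nat.strong_induction_on with
  | _ m IH =>
  intro x L hcyc hlen hm2l
  -- the two marked small cases
  have tri : ∀ (x : VV n) (u v : VV n), IsCyc (triG H) x [u, v] → vside x = false →
      mate x ∉ [x, u, v] → False := by
    intro x u v hc hs hmm
    obtain ⟨hch, hnd⟩ := hc
    simp only [List.cons_append, List.nil_append, chain_cons', chain_singleton'] at hch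
    obtain ⟨hxu, huv, hvx, -⟩ := hch
    have hmu : u ≠ mate x := by intro h; exact hmm (by simp [h])
    have hmv : v ≠ mate x := by intro h; exact hmm (by simp [h])
    have hHxu := triG_H_of_adj hxu hmu
    have hHvx := triG_H_of_adj hvx (by
      intro h
      exact hmv (by rw [h, mate_mate]))
    have hsu : vside u = true := by
      have := vside_ne_of_H h1 h2 hHxu
      simp [hs] at this; simp [this]
    have hsv : vside v = true := by
      have := vside_ne_of_H h1 h2 hHvx
      simp [hs] at this
      cases hvv : vside v
      · rw [hvv] at this; simp at this
      · rfl
    rcases huv with ⟨hveq, hne⟩ | hH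
    · rw [mate_eq_self_iff.2 hsu] at hveq
      simp only [List.nodup_cons] at hnd
      exact hnd.2.1 (by simp [hveq])
    · exact vside_ne_of_H h1 h2 hH (by rw [hsu, hsv])
  have quad : ∀ (x u v w : VV n), IsCyc (triG H) x [u, v, w] → vside x = false →
      mate x ∉ [x, u, v, w] → False := by
    intro x u v w hc hs hmm
    obtain ⟨hch, hnd⟩ := hc
    simp only [List.cons_append, List.nil_append, chain_cons', chain_singleton'] at hch
    obtain ⟨hxu, huv, hvw, hwx, -⟩ := hch
    have hmu : u ≠ mate x := by intro h; exact hmm (by simp [h])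
    have hmv : v ≠ mate x := by intro h; exact hmm (by simp [h])
    have hmw : w ≠ mate x := by intro h; exact hmm (by simp [h])
    have hHxu := triG_H_of_adj hxu hmu
    have hHwx := triG_H_of_adj hwx (by
      intro h; exact hmw (by rw [h, mate_mate]))
    have hsu : vside u = true := by
      have := vside_ne_of_H h1 h2 hHxu; simp [hs] at this; simp [this]
    have hsw : vside w = true := by
      have := vside_ne_of_H h1 h2 hHwx; simp [hs] at this
      cases hvv : vside w
      · rw [hvv] at this; simp at this
      · rfl
    have hHuv : H.Adj (pr u) (pr v) := by
      refine triG_H_of_adj huv ?_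
      intro h
      rw [mate_eq_self_iff.2 hsu] at h
      simp only [List.nodup_cons] at hnd
      exact hnd.2.1 (by simp [h])
    have hsv : vside v = false := by
      have := vside_ne_of_H h1 h2 hHuv
      cases hvv : vside v
      · rfl
      · rw [hvv, hsu] at this; simp at this
    have hHvw : H.Adj (pr v) (pr w) := by
      refine triG_H_of_adj hvw ?_
      intro h
      have : vside w = vside v := by rw [h, vside_mate]
      rw [hsw, hsv] at this; simp at this
    -- build a 4-cycle in H
    have hprxu : pr x ≠ pr u := fun h => by
      have := vside_eq_of_pr_eq h; rw [hs, hsu] at this; simp at this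
    have hprxv : pr x ≠ pr v := by
      intro h
      rcases pr_eq_cases h with h' | h'
      · simp only [List.nodup_cons] at hnd
        exact hnd.1 (by simp [h'])
      · exact hmv (by simp [h'])
    have hprxw : pr x ≠ pr w := fun h => by
      have := vside_eq_of_pr_eq h; rw [hs, hsw] at this; simp at this
    have hpruv : pr u ≠ pr v := fun h => by
      have := vside_eq_of_pr_eq h; rw [hsu, hsv] at this; simp at this
    have hpruw : pr u ≠ pr w := by
      intro h
      rcases pr_eq_cases h with h' | h'
      · simp only [List.nodup_cons] at hnd
        exact hnd.2.1 (by simp [h'])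
      · rw [mate_eq_self_iff.2 hsu] at h'
        simp only [List.nodup_cons] at hnd
        exact hnd.2.1 (by simp [h'])
    have hprvw : pr v ≠ pr w := fun h => by
      have := vside_eq_of_pr_eq h; rw [hsv, hsw] at this; simp at this
    have hHcyc : IsCyc H (pr x) [pr u, pr v, pr w] := by
      constructor
      · exact List.Chain.cons hHxu (List.Chain.cons hHuv
          (List.Chain.cons hHvw (List.Chain.cons hHwx List.Chain.nil)))
      · simp [List.nodup_cons, hprxu, hprxv, hprxw, hpruv, hpruw, hprvw]
    obtain ⟨wk, hwc, hwl⟩ := hHcyc.exists_cycle (by simp)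
    exact h3 2 le_rfl (by omega) wk hwc (by simp at hwl; omega)
  have big : 5 ≤ m → False := by
    intro h5
    rcases Classical.em (∃ y ∈ x :: L, mate y ≠ y ∧ mate y ∈ x :: L) with hbad | hbad
    · -- there is a doubled pair in the cycle
      obtain ⟨y, hyS, hym, hymS⟩ := hbad
      obtain ⟨l₁, l₂, hd⟩ := List.append_of_mem hyS
      obtain ⟨hrot, hperm⟩ := hcyc.rotate hd
      set L₂ := l₂ ++ l₁ with hL₂
      have hlen2 : L₂.length + 1 = m := by
        have := hperm.length_eq
        simp only [List.length_cons] at this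
        omega
      have hymL₂ : mate y ∈ L₂ := by
        have : mate y ∈ y :: L₂ := (hperm.mem_iff).2 hymS
        rcases List.mem_cons.1 this with h | h
        · exact absurd h hym
        · exact h
      obtain ⟨P, Q, hdPQ⟩ := List.append_of_mem hymL₂
      have hsy : vside y = false := by
        cases hyy : vside y
        · rfl
        · exact absurd (mate_eq_self_iff.2 hyy) hym
      have hnd2 : (y :: L₂).Nodup := hrot.2
      rcases em (P = []) with rfl | hPne
      · -- matching edge at the start
        simp only [List.nil_append] at hdPQ
        rw [hdPQ] at hrot
        have hQlen : Q.length + 2 = m := by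
          rw [hdPQ] at hlen2; simp at hlen2; omega
        have hQne : Q ≠ [] := by
          intro h; rw [h] at hQlen
          simp only [List.length_nil] at hQlen; omega
        have hred := surgery1 hrot hQne
        have hmark : mate y ∉ y :: Q := by
          rw [hdPQ] at hnd2
          simp only [List.nodup_cons] at hnd2
          intro h
          rcases List.mem_cons.1 h with h' | h'
          · exact hym h'
          · exact hnd2.2.1 h'
        exact (IH (m - 1) (by omega) y Q hred (by omega) (by omega)).2 (by omega) hsy hmark
      · rcases em (Q = []) with rfl | hQne
        · -- matching edge at the end: rotate once more
          rw [hdPQ] at hrot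
          have hPlen : P.length + 2 = m := by
            rw [hdPQ] at hlen2
            simp only [List.length_append, List.length_cons, List.length_nil] at hlen2
            omega
          have hrot2 := (hrot.rotate (b := mate y) (l₁ := y :: P) (l₂ := []) (by simp)).1
          simp only [List.nil_append] at hrot2
          have hrot3 : IsCyc (triG H) (mate y) (mate (mate y) :: P) := by
            rwa [mate_mate]
          have hred := surgery1 hrot3 (by
            intro h
            rw [h] at hPlen
            simp only [List.length_nil] at hPlen
            omega)
          have hmark : mate (mate y) ∉ mate y :: P := by
            rw [mate_mate]
            intro h
            rcases List.mem_cons.1 h with h' | h'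
            · exact hym h'.symm
            · have hy2 : y ∉ L₂ := (List.nodup_cons.1 hnd2).1
              exact hy2 (by rw [hdPQ]; exact List.mem_append_left _ h')
          exact (IH (m - 1) (by omega) (mate y) P hred (by omega) (by omega)).2 (by omega)
            (by rw [vside_mate]; exact hsy) hmark
        · -- the two copies are nonadjacent: split into two shorter cycles
          rw [hdPQ] at hrot
          obtain ⟨hcycP, hcycQ⟩ := surgery2 hrot hym hPne hQne
          have hlenPQ : P.length + Q.length + 2 = m := by
            rw [hdPQ] at hlen2
            simp only [List.length_append, List.length_cons] at hlen2
            omega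
          rw [hdPQ] at hnd2
          have hnd3 : (P ++ mate y :: Q).Nodup := (List.nodup_cons.1 hnd2).2
          rw [List.nodup_append] at hnd3
          have hndP : mate y ∉ y :: P := by
            intro h
            rcases List.mem_cons.1 h with h' | h'
            · exact hym h'
            · exact hnd3.2.2 _ h' _ (by simp) rfl
          have hndQ : mate y ∉ y :: Q := by
            intro h
            rcases List.mem_cons.1 h with h' | h'
            · exact hym h'
            · exact (List.nodup_cons.1 hnd3.2.1).1 h'
          rcases le_or_gt P.length Q.length with hle | hlt
          · have hQ2 : 2 ≤ Q.length := by omega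
            exact (IH (Q.length + 1) (by omega) y Q hcycQ rfl (by omega)).2 (by omega) hsy hndQ
          · have hP2 : 2 ≤ P.length := by omega
            exact (IH (P.length + 1) (by omega) y P hcycP rfl (by omega)).2 (by omega) hsy hndP
    · -- no doubled pair: project to an honest cycle in H
      push_neg at hbad
      have hbad' : ∀ y ∈ x :: L, mate y = y ∨ mate y ∉ x :: L := by
        intro y hy
        by_cases h : mate y = y
        · exact Or.inl h
        · exact Or.inr (hbad y hy h)
      have hchH : List.Chain (fun a b => H.Adj (pr a) (pr b)) x (L ++ [x]) := by
        refine chain_to_H (x :: L) hbad' (L ++ [x]) x hcyc.1 (by simp) ?_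
        intro y hy
        rcases List.mem_append.1 hy with h | h
        · simp [h]
        · simp at h; simp [h]
      -- parity: m is even
      have hpar : Even m := by
        have hflip : List.Chain (fun a b : VV n => vside a ≠ vside b) x (L ++ [x]) :=
          List.IsChain.imp (fun a b hab => vside_ne_of_H h1 h2 hab) hchH
        have := (chain_flip_parity vside L x x hflip).1 rfl
        rwa [hlen] at this
      -- the projected list is a cycle in H
      have hmapchain : List.Chain H.Adj (pr x) ((L.map pr) ++ [pr x]) := by
        have := List.isChain_map_of_isChain (R := fun a b => H.Adj (pr a) (pr b)) (S := H.Adj) pr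
          (fun a b hab => hab) hchH
        simp only [List.map_cons, List.map_append, List.map_nil] at this
        exact this
      have hmapnodup : (pr x :: L.map pr).Nodup := by
        have : ((x :: L).map pr).Nodup := by
          refine List.Nodup.map_on ?_ hcyc.2
          intro a ha b hb hab
          rcases pr_eq_cases hab with h | h
          · exact h.symm
          · rcases hbad' a ha with h' | h'
            · rw [← h', h]
            · rw [h] at hb; exact absurd hb h'
        simpa using this
      have hHcyc : IsCyc H (pr x) (L.map pr) := ⟨hmapchain, hmapnodup⟩
      obtain ⟨wk, hwc, hwl⟩ := hHcyc.exists_cycle (by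
        rw [List.length_map]; omega)
      obtain ⟨t, ht⟩ := hpar
      refine h3 t (by omega) (by omega) wk hwc ?_
      rw [hwl, List.length_map]
      omega
  refine ⟨big, ?_⟩
  intro h3m hside hmark
  rcases Nat.lt_or_ge m 5 with h5 | h5
  · have hm34 : m = 3 ∨ m = 4 := by omega
    rcases hm34 with rfl | rfl
    · -- m = 3
      obtain ⟨u, v, rfl⟩ : ∃ u v, L = [u, v] := by
        rcases L with _ | ⟨u, _ | ⟨v, _ | ⟨c, L'⟩⟩⟩ <;>
          first
            | (exact ⟨u, v, rfl⟩)
            | (exfalso; simp only [List.length_cons, List.length_nil] at hlen; omega)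
      exact tri x u v hcyc hside hmark
    · -- m = 4
      obtain ⟨u, v, w, rfl⟩ : ∃ u v w, L = [u, v, w] := by
        rcases L with _ | ⟨u, _ | ⟨v, _ | ⟨w, _ | ⟨c, L'⟩⟩⟩⟩ <;>
          first
            | (exact ⟨u, v, w, rfl⟩)
            | (exfalso; simp only [List.length_cons, List.length_nil] at hlen; omega)
      exact quad x u v w hcyc hside hmark
  · exact big h5

end Master
section TriangleSub
variable {W : Type*}

lemma exists_triangle_subgraph (G : SimpleGraph W) (v1 v2 v3 : W)
    (h12 : G.Adj v1 v2) (h13 : G.Adj v1 v3) (h23 : G.Adj v2 v3) :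
    ∃ T : G.Subgraph, T.verts = {v1, v2, v3} ∧ Nonempty (cycleGraph 3 ≃g T.coe) := by
  have hne12 : v1 ≠ v2 := h12.ne
  have hne13 : v1 ≠ v3 := h13.ne
  have hne23 : v2 ≠ v3 := h23.ne
  set vs : Set W := {v1, v2, v3} with hvs
  refine ⟨⟨vs, fun u v => u ≠ v ∧ u ∈ vs ∧ v ∈ vs, ?_, ?_, ?_⟩, rfl, ?_⟩
  · rintro u v ⟨hne, hu, hv⟩
    simp only [hvs, Set.mem_insert_iff, Set.mem_singleton_iff] at hu hv
    rcases hu with rfl | rfl | rfl <;> rcases hv with rfl | rfl | rfl <;>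
      first
        | exact absurd rfl hne
        | exact h12
        | exact h12.symm
        | exact h13
        | exact h13.symm
        | exact h23
        | exact h23.symm
  · rintro u v ⟨hne, hu, hv⟩
    exact hu
  · refine ⟨?_⟩
    rintro u v ⟨hne, hu, hv⟩
    exact ⟨hne.symm, hv, hu⟩
  · rw [cycleGraph_three_eq_top]
    have hmem1 : v1 ∈ vs := by simp [hvs]
    have hmem2 : v2 ∈ vs := by simp [hvs]
    have hmem3 : v3 ∈ vs := by simp [hvs]
    set f : Fin 3 → ↥vs := fun i =>
      if i = 0 then ⟨v1, hmem1⟩ else if i = 1 then ⟨v2, hmem2⟩ else ⟨v3, hmem3⟩ with hf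
    have e0 : (f 0 : W) = v1 := by simp [hf]
    have e1 : (f 1 : W) = v2 := by simp [hf]
    have e2 : (f 2 : W) = v3 := by simp [hf]
    have hfbij : Function.Bijective f := by
      constructor
      · intro i j hij
        fin_cases i <;> fin_cases j <;> simp_all [Subtype.ext_iff, e0, e1, e2]
      · rintro ⟨y, hy⟩
        simp only [hvs, Set.mem_insert_iff, Set.mem_singleton_iff] at hy
        rcases hy with rfl | rfl | rfl
        · exact ⟨0, by simp [hf]⟩
        · exact ⟨1, by simp [hf]⟩
        · exact ⟨2, by simp [hf]⟩
    refine ⟨⟨Equiv.ofBijective f hfbij, ?_⟩⟩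
    intro i j
    constructor
    · rintro hadj
      simp only [SimpleGraph.Subgraph.coe_adj] at hadj
      simp only [top_adj, ne_eq]
      intro hij
      exact hadj.1 (by rw [hij])
    · intro hij
      simp only [top_adj, ne_eq] at hij
      simp only [SimpleGraph.Subgraph.coe_adj]
      refine ⟨?_, (f i).2, (f j).2⟩
      intro hval2
      exact hij (hfbij.1 (Subtype.ext hval2))

end TriangleSub
section Assemble

open Classical in
theorem stmt15 (l : ℕ) (hl : 3 ≤ l) (n : ℕ) :
    ∃ G : SimpleGraph (Fin (3 * n)),
      CycleFree G (2 * l) ∧ zBip n l ≤ 2 * _root_.copyCount (cycleGraph 3) G := by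
  -- extract an extremal bipartite graph H
  set S : Set ℕ := {m | ∃ H : SimpleGraph (Fin n ⊕ Fin n),
    (∀ a b, ¬ H.Adj (Sum.inl a) (Sum.inl b)) ∧
    (∀ a b, ¬ H.Adj (Sum.inr a) (Sum.inr b)) ∧
    (∀ t, 2 ≤ t → t ≤ l → CycleFree H (2 * t)) ∧
    m = Nat.card H.edgeSet} with hS
  have hmem0 : 0 ∈ S := by
    refine ⟨⊥, by simp, by simp, ?_, by simp⟩
    intro t _ _ v w hw
    cases w with
    | nil => exact absurd hw.three_le_length (by simp)
    | cons h p => exact absurd h (by simp)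
  have hbdd : BddAbove S := by
    refine ⟨Nat.card (Sym2 (Fin n ⊕ Fin n)), ?_⟩
    rintro m ⟨H, -, -, -, rfl⟩
    exact Nat.card_le_card_of_injective (Subtype.val : H.edgeSet → Sym2 (Fin n ⊕ Fin n))
      Subtype.val_injective
  have hzmem : zBip n l ∈ S := Nat.sSup_mem ⟨0, hmem0⟩ hbdd
  obtain ⟨H, h1, h2, h3, hcard⟩ := hzmem
  -- the graph
  let e : VV n ≃ Fin (3 * n) :=
    (Equiv.sumCongr (Equiv.refl (Fin n)) finSumFinEquiv).trans
      (finSumFinEquiv.trans (finCongr (by ring)))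
  let G : SimpleGraph (Fin (3 * n)) := (triG H).map e.toEmbedding
  have φ : triG H ≃g G := SimpleGraph.Iso.map e (triG H)
  refine ⟨G, ?_, ?_⟩
  · -- cycle-freeness
    intro v w hw hwl
    have hinj : Function.Injective (φ.symm : G →g triG H) := φ.symm.toEquiv.injective
    have hw' : (w.map (φ.symm : G →g triG H)).IsCycle := hw.map hinj
    obtain ⟨L, hcyc, hlen⟩ := cyc_of_walk hw'
    have hlen' : L.length + 1 = 2 * l := by
      rw [hlen, SimpleGraph.Walk.length_map, hwl]
    exact (master hl h1 h2 h3 (2 * l) _ L hcyc hlen' le_rfl).1 (by omega)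
  · -- triangle count
    have hedge : ∀ E : H.edgeSet, ∃ a b,
        (E : Sym2 (Fin n ⊕ Fin n)) = s(Sum.inl a, Sum.inr b) ∧
          H.Adj (Sum.inl a) (Sum.inr b) := by
      rintro ⟨E, hE⟩
      induction E with
      | _ u v =>
        simp only [SimpleGraph.mem_edgeSet] at hE
        rcases u with a | b <;> rcases v with a' | b'
        · exact absurd hE (h1 a a')
        · exact ⟨a, b', rfl, hE⟩
        · exact ⟨a', b, Sym2.eq_swap, hE.symm⟩
        · exact absurd hE (h2 b b')
    -- the triangle subgraph attached to an edge
    have hG : ∀ u v : VV n, (triG H).Adj u v → G.Adj (e u) (e v) :=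
      fun u v huv => ⟨e.injective.ne huv.ne, u, v, huv, rfl, rfl⟩
    have mkTri : ∀ a b : Fin n, H.Adj (Sum.inl a) (Sum.inr b) →
        ∃ T : G.Subgraph,
          T.verts = {e (Sum.inl a), e (Sum.inr (Sum.inl a)), e (Sum.inr (Sum.inr b))} ∧
          Nonempty (cycleGraph 3 ≃g T.coe) := by
      intro a b hab
      refine exists_triangle_subgraph G _ _ _ (hG _ _ ?_) (hG _ _ ?_) (hG _ _ ?_)
      · exact Or.inl ⟨rfl, by simp⟩
      · exact Or.inr (by simpa [pr] using hab)
      · exact Or.inr (by simpa [pr] using hab)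
    -- count
    have hfin : Finite G.Subgraph := by
      refine Finite.of_injective (fun X => (X.verts, X.Adj)) ?_
      intro X Y hXY
      simp only [Prod.mk.injEq] at hXY
      exact SimpleGraph.Subgraph.ext hXY.1 hXY.2
    have key : ∀ E : H.edgeSet, ∃ (T : {T : G.Subgraph // Nonempty (cycleGraph 3 ≃g T.coe)})
        (a b : Fin n), (E : Sym2 (Fin n ⊕ Fin n)) = s(Sum.inl a, Sum.inr b) ∧
        T.val.verts = {e (Sum.inl a), e (Sum.inr (Sum.inl a)), e (Sum.inr (Sum.inr b))} := by
      intro E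
      obtain ⟨a, b, hE, hab⟩ := hedge E
      obtain ⟨T, hT1, hT2⟩ := mkTri a b hab
      exact ⟨⟨T, hT2⟩, a, b, hE, hT1⟩
    have hcount : Nat.card H.edgeSet ≤ _root_.copyCount (cycleGraph 3) G := by
      rw [_root_.copyCount]
      refine Nat.card_le_card_of_injective (fun E => (key E).choose) ?_
      intro E1 E2 h12
      have h12' : (key E1).choose = (key E2).choose := h12
      obtain ⟨a1, b1, hE1, hv1⟩ := (key E1).choose_spec
      obtain ⟨a2, b2, hE2, hv2⟩ := (key E2).choose_spec
      rw [h12'] at hv1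
      rw [hv1] at hv2
      have einj : Function.Injective e := e.injective
      have ha : a1 = a2 := by
        have hm : e (Sum.inl a1) ∈ ({e (Sum.inl a2), e (Sum.inr (Sum.inl a2)),
            e (Sum.inr (Sum.inr b2))} : Set (Fin (3 * n))) := by
          rw [← hv2]; simp
        simp only [Set.mem_insert_iff, Set.mem_singleton_iff] at hm
        rcases hm with hm | hm | hm
        · exact Sum.inl.inj (einj hm)
        · exact absurd (einj hm) (by simp)
        · exact absurd (einj hm) (by simp)
      have hb : b1 = b2 := by
        have hm : e (Sum.inr (Sum.inr b1)) ∈ ({e (Sum.inl a2), e (Sum.inr (Sum.inl a2)),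
            e (Sum.inr (Sum.inr b2))} : Set (Fin (3 * n))) := by
          rw [← hv2]; simp
        simp only [Set.mem_insert_iff, Set.mem_singleton_iff] at hm
        rcases hm with hm | hm | hm
        · exact absurd (einj hm) (by simp)
        · exact absurd (einj hm) (by simp)
        · exact Sum.inr.inj (Sum.inr.inj (einj hm))
      apply Subtype.ext
      rw [hE1, hE2, ha, hb]
    omega

end Assemble
end

section
/- For every k ≥ 2 there is a constant c_k such that every n-vertex graph with no cycle of length 4 contains at most c_k · n^{k + 1/2} copies of the cycle C_{2k+1}. -/
set_option maxHeartbeats 1000000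

open SimpleGraph

/-! ### Auxiliary lemmas -/

/-- In a `C₄`-free graph, two distinct vertices have at most one common neighbour. -/
lemma uniq_common {V : Type*} {G : SimpleGraph V} (h4 : CycleFree G 4) {x z a b : V}
    (hxz : x ≠ z) (ha1 : G.Adj x a) (ha2 : G.Adj z a) (hb1 : G.Adj x b) (hb2 : G.Adj z b) :
    a = b := by
  by_contra hab
  refine h4 (Walk.cons ha1 (Walk.cons ha2.symm (Walk.cons hb2 (Walk.cons hb1.symm Walk.nil))))
    ?_ (by simp)
  have hxa := ha1.ne
  have hxb := hb1.ne
  have hza := ha2.ne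
  have hzb := hb2.ne
  rw [Walk.isCycle_def]
  refine ⟨?_, by simp, ?_⟩
  · rw [Walk.isTrail_def]
    simp only [Walk.edges_cons, Walk.edges_nil, List.nodup_cons, List.mem_cons,
      List.not_mem_nil, or_false, List.nodup_nil, and_true, List.mem_singleton, Sym2.eq_iff]
    push_neg
    aesop
  · simp only [Walk.support_cons, Walk.support_nil, List.tail_cons, List.nodup_cons,
      List.mem_cons, List.not_mem_nil, or_false, List.mem_singleton, List.nodup_nil, and_true]
    push_neg
    aesop

section
variable {n k : ℕ}

lemma cyc_adj_succ {m : ℕ} (hm : 2 ≤ m) (i : Fin m) :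
    (cycleGraph m).Adj i ⟨(i.val + 1) % m, Nat.mod_lt _ (by omega)⟩ := by
  haveI : NeZero m := ⟨by omega⟩
  rw [cycleGraph_adj']
  right
  rw [Fin.sub_def]
  simp only
  rw [Nat.add_mod_mod]
  have h1 : m - i.val + (i.val + 1) = 1 + m := by omega
  rw [h1, Nat.add_mod_right, Nat.mod_eq_of_lt (by omega)]

lemma iso_verts (G : SimpleGraph (Fin n)) {m : ℕ} {G' : G.Subgraph}
    (φ : cycleGraph m ≃g G'.coe) :
    G'.verts = Set.range (fun i => (φ i : Fin n)) := by
  ext v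
  constructor
  · intro hv
    exact ⟨φ.symm ⟨v, hv⟩, by simp⟩
  · rintro ⟨i, rfl⟩
    exact (φ i).2

lemma iso_adj (G : SimpleGraph (Fin n)) {m : ℕ} {G' : G.Subgraph}
    (φ : cycleGraph m ≃g G'.coe) (a b : Fin n) :
    G'.Adj a b ↔ ∃ i j, (cycleGraph m).Adj i j ∧ (φ i : Fin n) = a ∧ (φ j : Fin n) = b := by
  constructor
  · intro h
    have ha : a ∈ G'.verts := G'.edge_vert h
    have hb : b ∈ G'.verts := G'.edge_vert h.symm
    refine ⟨φ.symm ⟨a, ha⟩, φ.symm ⟨b, hb⟩, ?_, by simp, by simp⟩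
    apply φ.symm.map_adj_iff.mpr
    exact h
  · rintro ⟨i, j, hij, rfl, rfl⟩
    have := φ.map_adj_iff.mpr hij
    rwa [Subgraph.coe_adj] at this

lemma copy_le_tuples (G : SimpleGraph (Fin n)) (hk : 2 ≤ k) :
    _root_.copyCount (cycleGraph (2 * k + 1)) G ≤
      Nat.card {u : Fin (2 * k + 1) → Fin n // Function.Injective u ∧
        ∀ i : Fin (2 * k + 1), G.Adj (u i)
          (u ⟨(i.val + 1) % (2 * k + 1), Nat.mod_lt _ i.pos⟩)} := by
  set m := 2 * k + 1 with hm
  apply Nat.card_le_card_of_injective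
    (f := fun p => (⟨fun i => ((Classical.choice p.2) i : Fin n), ?_, ?_⟩ :
      {u : Fin m → Fin n // Function.Injective u ∧
        ∀ i : Fin m, G.Adj (u i) (u ⟨(i.val + 1) % m, Nat.mod_lt _ i.pos⟩)}))
  · rintro ⟨G1, h1⟩ ⟨G2, h2⟩ h
    have hu : (fun i => ((Classical.choice h1) i : Fin n)) =
        (fun i => ((Classical.choice h2) i : Fin n)) := congrArg Subtype.val h
    ext1
    apply SimpleGraph.Subgraph.ext
    · rw [iso_verts G (Classical.choice h1), iso_verts G (Classical.choice h2), hu]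
    · ext a b
      rw [iso_adj G (Classical.choice h1), iso_adj G (Classical.choice h2)]
      simp only [funext_iff] at hu
      simp_rw [hu]
  · exact fun i j hij => (Classical.choice p.2).injective (Subtype.val_injective hij)
  · intro i
    have := (Classical.choice p.2).map_adj_iff.mpr (cyc_adj_succ (by omega) i)
    rw [Subgraph.coe_adj] at this
    exact p.1.adj_sub this

lemma tuples_le_prod {G : SimpleGraph (Fin n)} (hk : 2 ≤ k) (h4 : CycleFree G 4) :
    Nat.card {u : Fin (2 * k + 1) → Fin n // Function.Injective u ∧
        ∀ i : Fin (2 * k + 1), G.Adj (u i)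
          (u ⟨(i.val + 1) % (2 * k + 1), Nat.mod_lt _ i.pos⟩)} ≤
      Nat.card ({e : Fin n × Fin n // G.Adj e.1 e.2} × (Fin (k - 1) → Fin n)) := by
  set m := 2 * k + 1 with hmdef
  have hm5 : 5 ≤ m := by omega
  have hadj' : ∀ (u : Fin m → Fin n),
      (∀ i : Fin m, G.Adj (u i) (u ⟨(i.val + 1) % m, Nat.mod_lt _ i.pos⟩)) →
      ∀ (a : ℕ) (ha : a < m) (b : ℕ) (hb : b < m), (a + 1) % m = b →
      G.Adj (u ⟨a, ha⟩) (u ⟨b, hb⟩) := by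
    intro u hu a ha b hb hab
    have h := hu ⟨a, ha⟩
    have : (⟨(a + 1) % m, Nat.mod_lt _ (by omega)⟩ : Fin m) = ⟨b, hb⟩ := Fin.ext hab
    rwa [this] at h
  apply Nat.card_le_card_of_injective (f := fun p =>
    ((⟨(p.1 ⟨1, by omega⟩, p.1 ⟨2, by omega⟩),
        hadj' p.1 p.2.2 1 (by omega) 2 (by omega) (by rw [Nat.mod_eq_of_lt (by omega)])⟩ :
        {e : Fin n × Fin n // G.Adj e.1 e.2}),
     fun j : Fin (k - 1) => p.1 ⟨2 * j.val + 4, by omega⟩))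
  rintro ⟨u, hui, hua⟩ ⟨w, hwi, hwa⟩ h
  have h1 : u ⟨1, by omega⟩ = w ⟨1, by omega⟩ := by
    have := congrArg (fun q => q.1.1.1) h; simpa using this
  have h2 : u ⟨2, by omega⟩ = w ⟨2, by omega⟩ := by
    have := congrArg (fun q => q.1.1.2) h; simpa using this
  have hJ : ∀ j : Fin (k - 1), u ⟨2 * j.val + 4, by omega⟩ = w ⟨2 * j.val + 4, by omega⟩ := by
    intro j
    have := congrArg (fun q => q.2 j) h; simpa using this
  have heven : ∀ (r : ℕ) (hr : r < m), 2 ≤ r → r % 2 = 0 → u ⟨r, hr⟩ = w ⟨r, hr⟩ := by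
    intro r hr hr2 hre
    rcases eq_or_lt_of_le hr2 with he | hlt
    · subst he; exact h2
    · have hr4 : 4 ≤ r := by omega
      have hj : (r - 4) / 2 < k - 1 := by omega
      have heq : 2 * ((r - 4) / 2) + 4 = r := by omega
      have := hJ ⟨(r - 4) / 2, hj⟩
      have hfin : (⟨2 * ((r - 4) / 2) + 4, by omega⟩ : Fin m) = ⟨r, hr⟩ := Fin.ext heq
      rwa [hfin] at this
  have hne : ∀ (a b : ℕ) (ha : a < m) (hb : b < m), a ≠ b →
      u ⟨a, ha⟩ ≠ u ⟨b, hb⟩ := by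
    intro a b ha hb hab he
    exact hab (by simpa using congrArg Fin.val (hui he))
  have key : ∀ (r : ℕ) (hr : r < m), u ⟨r, hr⟩ = w ⟨r, hr⟩ := by
    intro r hr
    rcases Nat.lt_or_ge r 2 with hsmall | hbig
    · interval_cases r
      · have hx : u ⟨1, by omega⟩ ≠ u ⟨2 * k, by omega⟩ :=
          hne 1 (2 * k) (by omega) (by omega) (by omega)
        have e2k : u ⟨2 * k, by omega⟩ = w ⟨2 * k, by omega⟩ :=
          heven (2 * k) (by omega) (by omega) (by omega)
        have ha1 : G.Adj (u ⟨1, by omega⟩) (u ⟨0, hr⟩) :=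
          (hadj' u hua 0 (by omega) 1 (by omega) (by rw [Nat.mod_eq_of_lt (by omega)])).symm
        have ha2 : G.Adj (u ⟨2 * k, by omega⟩) (u ⟨0, hr⟩) :=
          hadj' u hua (2 * k) (by omega) 0 (by omega) (by rw [← hmdef]; exact Nat.mod_self m)
        have hb1 : G.Adj (u ⟨1, by omega⟩) (w ⟨0, hr⟩) := by
          rw [h1]
          exact (hadj' w hwa 0 (by omega) 1 (by omega) (by rw [Nat.mod_eq_of_lt (by omega)])).symm
        have hb2 : G.Adj (u ⟨2 * k, by omega⟩) (w ⟨0, hr⟩) := by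
          rw [e2k]
          exact hadj' w hwa (2 * k) (by omega) 0 (by omega) (by rw [← hmdef]; exact Nat.mod_self m)
        exact uniq_common h4 hx ha1 ha2 hb1 hb2
      · exact h1
    · rcases Nat.even_or_odd r with he | ho
      · exact heven r hr hbig (Nat.even_iff.mp he)
      · have hro : r % 2 = 1 := Nat.odd_iff.mp ho
        have hr3 : 3 ≤ r := by omega
        have hrk : r + 1 < m := by omega
        have hprev : u ⟨r - 1, by omega⟩ = w ⟨r - 1, by omega⟩ :=
          heven (r - 1) (by omega) (by omega) (by omega)
        have hnext : u ⟨r + 1, hrk⟩ = w ⟨r + 1, hrk⟩ := heven (r + 1) hrk (by omega) (by omega)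
        have hx : u ⟨r - 1, by omega⟩ ≠ u ⟨r + 1, hrk⟩ :=
          hne (r - 1) (r + 1) (by omega) hrk (by omega)
        have ha1 : G.Adj (u ⟨r - 1, by omega⟩) (u ⟨r, hr⟩) :=
          hadj' u hua (r - 1) (by omega) r hr
            (by rw [show r - 1 + 1 = r by omega, Nat.mod_eq_of_lt hr])
        have ha2 : G.Adj (u ⟨r + 1, hrk⟩) (u ⟨r, hr⟩) :=
          (hadj' u hua r hr (r + 1) hrk (by rw [Nat.mod_eq_of_lt hrk])).symm
        have hb1 : G.Adj (u ⟨r - 1, by omega⟩) (w ⟨r, hr⟩) := by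
          rw [hprev]
          exact hadj' w hwa (r - 1) (by omega) r hr
            (by rw [show r - 1 + 1 = r by omega, Nat.mod_eq_of_lt hr])
        have hb2 : G.Adj (u ⟨r + 1, hrk⟩) (w ⟨r, hr⟩) := by
          rw [hnext]
          exact (hadj' w hwa r hr (r + 1) hrk (by rw [Nat.mod_eq_of_lt hrk])).symm
        exact uniq_common h4 hx ha1 ha2 hb1 hb2
  apply Subtype.ext
  funext i
  have := key i.val i.isLt
  simpa using this

open Finset in
lemma edge_bound {G : SimpleGraph (Fin n)} (h4 : CycleFree G 4) :
    (Nat.card {e : Fin n × Fin n // G.Adj e.1 e.2}) ^ 2 ≤ 2 * n ^ 3 := by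
  classical
  set d : Fin n → ℕ := fun x => (univ.filter (fun y => G.Adj x y)).card with hd
  have hE : Nat.card {e : Fin n × Fin n // G.Adj e.1 e.2} = ∑ x, d x := by
    rw [Nat.card_eq_fintype_card, Fintype.card_subtype, card_filter, Fintype.sum_prod_type]
    exact Finset.sum_congr rfl fun x _ => (card_filter _ _).symm
  set c : Fin n → Fin n → ℕ :=
    fun y z => (univ.filter (fun x => G.Adj x y ∧ G.Adj x z)).card with hc
  have hsq : ∑ x, d x ^ 2 = ∑ y, ∑ z, c y z := by
    have h1 : ∀ x, d x ^ 2 = ∑ y, ∑ z, (if G.Adj x y ∧ G.Adj x z then 1 else 0) := by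
      intro x
      rw [sq, hd]
      simp only [card_filter, Finset.sum_mul_sum]
      refine Finset.sum_congr rfl fun y _ => Finset.sum_congr rfl fun z _ => ?_
      by_cases h1 : G.Adj x y <;> by_cases h2 : G.Adj x z <;> simp [h1, h2]
    simp_rw [h1, hc, card_filter]
    rw [Finset.sum_comm]
    refine Finset.sum_congr rfl fun y _ => Finset.sum_comm
  have hCle : ∀ y z : Fin n, y ≠ z → c y z ≤ 1 := by
    intro y z hyz
    refine Finset.card_le_one.mpr fun a ha b hb => ?_
    rw [mem_filter] at ha hb
    exact uniq_common h4 hyz ha.2.1.symm ha.2.2.symm hb.2.1.symm hb.2.2.symm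
  have hD2 : ∑ x, d x ^ 2 ≤ 2 * n ^ 2 := by
    rw [hsq]
    calc ∑ y, ∑ z, c y z ≤ ∑ y : Fin n, 2 * n := by
          refine Finset.sum_le_sum fun y _ => ?_
          rw [← Finset.add_sum_erase _ _ (Finset.mem_univ y)]
          have h1 : c y y ≤ n := le_trans (Finset.card_filter_le _ _) (by simp)
          have h2 : ∑ z ∈ univ.erase y, c y z ≤ ∑ z ∈ univ.erase y, 1 :=
            Finset.sum_le_sum fun z hz => hCle y z (Finset.ne_of_mem_erase hz).symm
          have h3 : ∑ z ∈ univ.erase y, (1 : ℕ) ≤ n := by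
            simp only [Finset.sum_const, smul_eq_mul, mul_one]
            exact le_trans (Finset.card_le_card (Finset.erase_subset _ _)) (by simp)
          omega
      _ = 2 * n ^ 2 := by simp [sq]; ring
  have hcs := Finset.sum_mul_sq_le_sq_mul_sq Finset.univ (fun _ : Fin n => 1) d
  simp only [one_pow, one_mul, Finset.sum_const, Finset.card_univ, Fintype.card_fin,
    smul_eq_mul, mul_one] at hcs
  rw [hE]
  calc (∑ x, d x) ^ 2 ≤ n * ∑ x, d x ^ 2 := hcs
    _ ≤ n * (2 * n ^ 2) := Nat.mul_le_mul_left n hD2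
    _ = 2 * n ^ 3 := by ring

end

theorem stmt18 (k : ℕ) (hk : 2 ≤ k) :
    ∃ c : ℝ, 0 < c ∧ ∀ (n : ℕ) (G : SimpleGraph (Fin n)),
      CycleFree G 4 →
      (_root_.copyCount (cycleGraph (2 * k + 1)) G : ℝ) ≤ c * (n : ℝ) ^ ((k : ℝ) + 1 / 2) := by
  refine ⟨Real.sqrt 2, Real.sqrt_pos.mpr (by norm_num), ?_⟩
  intro n G h4
  classical
  have hprod : Nat.card ({e : Fin n × Fin n // G.Adj e.1 e.2} × (Fin (k - 1) → Fin n)) =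
      Nat.card {e : Fin n × Fin n // G.Adj e.1 e.2} * n ^ (k - 1) := by
    rw [Nat.card_prod]
    congr 1
    rw [Nat.card_eq_fintype_card]
    simp [Fintype.card_fun]
  set E := Nat.card {e : Fin n × Fin n // G.Adj e.1 e.2} with hEdef
  have hchain : _root_.copyCount (cycleGraph (2 * k + 1)) G ≤ E * n ^ (k - 1) :=
    le_trans (copy_le_tuples G hk) (le_trans (tuples_le_prod hk h4) (le_of_eq hprod))
  have hE2 : (E : ℝ) ^ 2 ≤ 2 * (n : ℝ) ^ 3 := by exact_mod_cast edge_bound h4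
  have hEb : (E : ℝ) ≤ Real.sqrt 2 * (n : ℝ) ^ ((3 : ℝ) / 2) := by
    have h0 : (0 : ℝ) ≤ (E : ℝ) := by positivity
    have h1 : (E : ℝ) ≤ Real.sqrt (2 * (n : ℝ) ^ 3) := by
      rw [← Real.sqrt_sq h0]
      exact Real.sqrt_le_sqrt hE2
    refine h1.trans (le_of_eq ?_)
    rw [Real.sqrt_mul (by norm_num : (0 : ℝ) ≤ 2)]
    congr 1
    rw [Real.sqrt_eq_rpow, ← Real.rpow_natCast (n : ℝ) 3,
      ← Real.rpow_mul (Nat.cast_nonneg n)]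
    norm_num
  rcases Nat.eq_zero_or_pos n with rfl | hn
  · have hzero : _root_.copyCount (cycleGraph (2 * k + 1)) G = 0 := by
      have h0 : (0 : ℕ) ^ (k - 1) = 0 := Nat.zero_pow (by omega)
      rw [h0, Nat.mul_zero] at hchain
      omega
    rw [hzero]
    push_cast
    positivity
  · have hnp : (0 : ℝ) < (n : ℝ) := by exact_mod_cast hn
    calc (_root_.copyCount (cycleGraph (2 * k + 1)) G : ℝ)
        ≤ (E : ℝ) * (n : ℝ) ^ (k - 1 : ℕ) := by exact_mod_cast hchain
      _ ≤ (Real.sqrt 2 * (n : ℝ) ^ ((3 : ℝ) / 2)) * (n : ℝ) ^ (k - 1 : ℕ) :=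
          mul_le_mul_of_nonneg_right hEb (by positivity)
      _ = Real.sqrt 2 * (n : ℝ) ^ ((k : ℝ) + 1 / 2) := by
          rw [mul_assoc, ← Real.rpow_natCast (n : ℝ) (k - 1), ← Real.rpow_add hnp]
          congr 2
          push_cast [Nat.cast_sub (show 1 ≤ k by omega)]
          ring
end
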